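/- arXiv:2203.03070 — 5 statements merged into one kernel-verified Lean document; each statement's English description precedes it below -/
import Mathlib

section
/- Linearity of QDQs: if Λ_F is a QDQ of F at (x̄, ȳ_F) in the direction of Γ_F and Λ_G is a QDQ of G at (x̄, ȳ_G) in the direction of Γ_G, then for any scalars α, β ∈ ℝ, the set αΛ_F + βΛ_G is a QDQ of the set-valued map x ⇝ αF(x) + βG(x) at (x̄, αȳ_F + βȳ_G) in the direction of Γ_F ∩ Γ_G. -/
open Filter Topology Metric
open scoped ENNReal NNReal

/-- A pseudo-modulus: monotone nondecreasing on ℝ₊, with value 0 at 0 and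
right-limit 0 at 0 (values in `ℝ≥0∞`, i.e. ℝ₊ ∪ {+∞}). -/
def IsPseudoModulus (ρ : ℝ → ℝ≥0∞) : Prop :=
  (∀ ⦃s t : ℝ⦄, 0 ≤ s → s ≤ t → ρ s ≤ ρ t) ∧ ρ 0 = 0 ∧
    Tendsto ρ (𝓝[>] (0 : ℝ)) (𝓝 0)

/-- `Λ` is a Quasi Differential Quotient (QDQ) of the set-valued map `Fm` at
`(x₀, y₀)` in the direction of `Γ`. -/
def IsQDQ {E F : Type*} [NormedAddCommGroup E] [NormedSpace ℝ E]
    [NormedAddCommGroup F] [NormedSpace ℝ F]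
    (Λ : Set (E →L[ℝ] F)) (Fm : E → Set F) (x₀ : E) (y₀ : F) (Γ : Set E) : Prop :=
  IsCompact Λ ∧ ∃ ρ : ℝ → ℝ≥0∞, IsPseudoModulus ρ ∧
    ∀ δ : ℝ, 0 < δ → ρ δ < ⊤ →
      ∃ (L : E → (E →L[ℝ] F)) (h : E → F),
        ContinuousOn (fun x => (L x, h x)) (closedBall x₀ δ ∩ Γ) ∧
        ∀ x ∈ closedBall x₀ δ ∩ Γ,
          infDist (L x) Λ ≤ (ρ δ).toReal ∧
          ‖h x‖ ≤ δ * (ρ δ).toReal ∧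
          y₀ + L x (x - x₀) + h x ∈ Fm x

private lemma infDist_comb_aux {X : Type*} [NormedAddCommGroup X] [NormedSpace ℝ X]
    (ΛF ΛG : Set X) (α β : ℝ) (L M : X) (aF aG : ℝ)
    (h1 : infDist L ΛF ≤ aF) (h2 : infDist M ΛG ≤ aG) (haF : 0 ≤ aF) (haG : 0 ≤ aG) :
    infDist (α • L + β • M) {T | ∃ L' ∈ ΛF, ∃ M' ∈ ΛG, T = α • L' + β • M'}
      ≤ |α| * aF + |β| * aG := by
  rcases ΛF.eq_empty_or_nonempty with rfl | hne1
  · have : {T | ∃ L' ∈ (∅ : Set X), ∃ M' ∈ ΛG, T = α • L' + β • M'} = ∅ := by simp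
    rw [this, Metric.infDist_empty]
    positivity
  rcases ΛG.eq_empty_or_nonempty with rfl | hne2
  · have : {T | ∃ L' ∈ ΛF, ∃ M' ∈ (∅ : Set X), T = α • L' + β • M'} = ∅ := by simp
    rw [this, Metric.infDist_empty]
    positivity
  refine le_of_forall_pos_le_add fun ε hε => ?_
  set ε' := ε / (|α| + |β| + 1) with hε'def
  have hε' : 0 < ε' := by positivity
  obtain ⟨L', hL', hdL⟩ :=
    (Metric.infDist_lt_iff hne1).mp (lt_of_le_of_lt h1 (show aF < aF + ε' by linarith))
  obtain ⟨M', hM', hdM⟩ :=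
    (Metric.infDist_lt_iff hne2).mp (lt_of_le_of_lt h2 (show aG < aG + ε' by linarith))
  have hmem : α • L' + β • M' ∈ {T | ∃ L' ∈ ΛF, ∃ M' ∈ ΛG, T = α • L' + β • M'} :=
    ⟨L', hL', M', hM', rfl⟩
  have hd : dist (α • L + β • M) (α • L' + β • M') ≤ |α| * dist L L' + |β| * dist M M' := by
    calc dist (α • L + β • M) (α • L' + β • M')
        ≤ dist (α • L) (α • L') + dist (β • M) (β • M') := dist_add_add_le _ _ _ _
      _ = |α| * dist L L' + |β| * dist M M' := by
          rw [dist_smul₀, dist_smul₀, Real.norm_eq_abs, Real.norm_eq_abs]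
  have hinf := Metric.infDist_le_dist_of_mem (x := α • L + β • M) hmem
  have key : |α| * dist L L' + |β| * dist M M' ≤ |α| * aF + |β| * aG + ε := by
    have h3 : |α| * dist L L' ≤ |α| * (aF + ε') :=
      mul_le_mul_of_nonneg_left hdL.le (abs_nonneg _)
    have h4 : |β| * dist M M' ≤ |β| * (aG + ε') :=
      mul_le_mul_of_nonneg_left hdM.le (abs_nonneg _)
    have h5 : (|α| + |β|) * ε' ≤ ε := by
      have he : (|α| + |β| + 1) * ε' = ε := by
        rw [hε'def]; field_simp
      nlinarith [abs_nonneg α, abs_nonneg β, hε'.le]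
    nlinarith [abs_nonneg α, abs_nonneg β]
  linarith [hinf, hd]

theorem isQDQ_linearity {N n : ℕ}
    {F G : EuclideanSpace ℝ (Fin N) → Set (EuclideanSpace ℝ (Fin n))}
    {ΓF ΓG : Set (EuclideanSpace ℝ (Fin N))} {x₀ : EuclideanSpace ℝ (Fin N)}
    {yF yG : EuclideanSpace ℝ (Fin n)}
    {ΛF ΛG : Set (EuclideanSpace ℝ (Fin N) →L[ℝ] EuclideanSpace ℝ (Fin n))}
    (hF : IsQDQ ΛF F x₀ yF ΓF) (hG : IsQDQ ΛG G x₀ yG ΓG) (α β : ℝ) :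
    IsQDQ {T | ∃ L ∈ ΛF, ∃ M ∈ ΛG, T = α • L + β • M}
      (fun x => {v | ∃ y ∈ F x, ∃ z ∈ G x, v = α • y + β • z})
      x₀ (α • yF + β • yG) (ΓF ∩ ΓG) := by
  obtain ⟨hFc, ρF, ⟨hFmono, hF0, hFtend⟩, hFδ⟩ := hF
  obtain ⟨hGc, ρG, ⟨hGmono, hG0, hGtend⟩, hGδ⟩ := hG
  set c : ℝ≥0∞ := ENNReal.ofReal (|α| + |β| + 1) with hcdef
  have hcpos : 0 < |α| + |β| + 1 := by positivity
  have hc0 : c ≠ 0 := by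
    simp [hcdef, ENNReal.ofReal_eq_zero]; positivity
  have hctop : c ≠ ⊤ := ENNReal.ofReal_ne_top
  refine ⟨?_, fun δ => c * (ρF δ + ρG δ), ⟨?_, ?_, ?_⟩, ?_⟩
  · -- compactness
    have heq : {T | ∃ L ∈ ΛF, ∃ M ∈ ΛG, T = α • L + β • M}
        = (fun p : _ × _ => α • p.1 + β • p.2) '' (ΛF ×ˢ ΛG) := by
      ext T
      simp only [Set.mem_image, Set.mem_prod, Set.mem_setOf_eq, Prod.exists]
      constructor
      · rintro ⟨L, hL, M, hM, rfl⟩; exact ⟨L, M, ⟨hL, hM⟩, rfl⟩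
      · rintro ⟨L, M, ⟨hL, hM⟩, rfl⟩; exact ⟨L, hL, M, hM, rfl⟩
    rw [heq]
    exact (hFc.prod hGc).image ((continuous_fst.const_smul α).add (continuous_snd.const_smul β))
  · -- monotone
    intro s t hs hst
    exact mul_le_mul' le_rfl (add_le_add (hFmono hs hst) (hGmono hs hst))
  · -- zero
    simp [hF0, hG0]
  · -- tendsto
    have h1 : Tendsto (fun δ => ρF δ + ρG δ) (𝓝[>] (0 : ℝ)) (𝓝 (0 + 0)) :=
      hFtend.add hGtend
    rw [add_zero] at h1
    have h2 := ENNReal.Tendsto.const_mul (a := c) h1 (Or.inr hctop)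
    simpa using h2
  · -- main estimate
    intro δ hδ hfin
    have hsum : ρF δ + ρG δ < ⊤ := by
      rcases lt_or_ge (ρF δ + ρG δ) ⊤ with h | h
      · exact h
      · exact absurd hfin (by simp [top_le_iff.mp h, ENNReal.mul_top hc0, lt_irrefl])
    have hFfin : ρF δ < ⊤ := lt_of_le_of_lt le_self_add hsum
    have hGfin : ρG δ < ⊤ := lt_of_le_of_lt le_add_self hsum
    obtain ⟨LF, hF', hFcont, hFprop⟩ := hFδ δ hδ hFfin
    obtain ⟨LG, hG', hGcont, hGprop⟩ := hGδ δ hδ hGfin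
    refine ⟨fun x => α • LF x + β • LG x, fun x => α • hF' x + β • hG' x, ?_, ?_⟩
    · -- continuity
      have hsubF : closedBall x₀ δ ∩ (ΓF ∩ ΓG) ⊆ closedBall x₀ δ ∩ ΓF :=
        fun x hx => ⟨hx.1, hx.2.1⟩
      have hsubG : closedBall x₀ δ ∩ (ΓF ∩ ΓG) ⊆ closedBall x₀ δ ∩ ΓG :=
        fun x hx => ⟨hx.1, hx.2.2⟩
      have cF := hFcont.mono hsubF
      have cG := hGcont.mono hsubG
      have cLF : ContinuousOn LF _ := continuous_fst.comp_continuousOn cF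
      have chF : ContinuousOn hF' _ := continuous_snd.comp_continuousOn cF
      have cLG : ContinuousOn LG _ := continuous_fst.comp_continuousOn cG
      have chG : ContinuousOn hG' _ := continuous_snd.comp_continuousOn cG
      exact ((cLF.const_smul α).add (cLG.const_smul β)).prodMk
        ((chF.const_smul α).add (chG.const_smul β))
    · intro x hx
      have hxF : x ∈ closedBall x₀ δ ∩ ΓF := ⟨hx.1, hx.2.1⟩
      have hxG : x ∈ closedBall x₀ δ ∩ ΓG := ⟨hx.1, hx.2.2⟩
      obtain ⟨hFd, hFh, hFm⟩ := hFprop x hxF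
      obtain ⟨hGd, hGh, hGm⟩ := hGprop x hxG
      set rF := (ρF δ).toReal with hrF
      set rG := (ρG δ).toReal with hrG
      have hrF0 : 0 ≤ rF := ENNReal.toReal_nonneg
      have hrG0 : 0 ≤ rG := ENNReal.toReal_nonneg
      have htR : (c * (ρF δ + ρG δ)).toReal = (|α| + |β| + 1) * (rF + rG) := by
        rw [ENNReal.toReal_mul, ENNReal.toReal_add hFfin.ne hGfin.ne,
          hcdef, ENNReal.toReal_ofReal hcpos.le]
      refine ⟨?_, ?_, ?_⟩
      · rw [htR]
        calc infDist (α • LF x + β • LG x) {T | ∃ L ∈ ΛF, ∃ M ∈ ΛG, T = α • L + β • M}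
            ≤ |α| * rF + |β| * rG := infDist_comb_aux ΛF ΛG α β _ _ _ _ hFd hGd hrF0 hrG0
          _ ≤ (|α| + |β| + 1) * (rF + rG) := by nlinarith [abs_nonneg α, abs_nonneg β]
      · rw [htR]
        calc ‖α • hF' x + β • hG' x‖ ≤ ‖α • hF' x‖ + ‖β • hG' x‖ := norm_add_le _ _
          _ = |α| * ‖hF' x‖ + |β| * ‖hG' x‖ := by
              rw [norm_smul, norm_smul, Real.norm_eq_abs, Real.norm_eq_abs]
          _ ≤ |α| * (δ * rF) + |β| * (δ * rG) :=
              add_le_add (mul_le_mul_of_nonneg_left hFh (abs_nonneg α))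
                (mul_le_mul_of_nonneg_left hGh (abs_nonneg β))
          _ ≤ δ * ((|α| + |β| + 1) * (rF + rG)) := by
              nlinarith [abs_nonneg α, abs_nonneg β, mul_nonneg hδ.le hrF0, mul_nonneg hδ.le hrG0,
                mul_nonneg (abs_nonneg α) (mul_nonneg hδ.le hrG0),
                mul_nonneg (abs_nonneg β) (mul_nonneg hδ.le hrF0)]
      · refine ⟨_, hFm, _, hGm, ?_⟩
        simp only [ContinuousLinearMap.add_apply, ContinuousLinearMap.coe_smul',
          Pi.smul_apply]
        module
end

section
/- Product property of QDQs: if Λ_F and Λ_G are QDQs of set-valued maps F : ℝᴺ ⇝ ℝⁿ and G : ℝᴺ ⇝ ℝᵐ at (x̄, ȳ_F) and (x̄, ȳ_G) in the directions Γ_F and Γ_G respectively, then the set Λ_F × Λ_G := {(L,M) : L ∈ Λ_F, M ∈ Λ_G}, viewed inside Lin(ℝᴺ, ℝⁿ × ℝᵐ), is a QDQ of the map x ⇝ F(x) × G(x) at (x̄, (ȳ_F, ȳ_G)) in the direction of Γ_F ∩ Γ_G. -/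
open Filter Topology Metric
open scoped ENNReal NNReal

section Aux

variable {E F G : Type*} [NormedAddCommGroup E] [NormedSpace ℝ E]
  [NormedAddCommGroup F] [NormedSpace ℝ F] [NormedAddCommGroup G] [NormedSpace ℝ G]

lemma prod_sub_prod (L L' : E →L[ℝ] F) (M M' : E →L[ℝ] G) :
    L.prod M - L'.prod M' = (L - L').prod (M - M') := by
  ext x <;> simp

lemma dist_prod_prod (L L' : E →L[ℝ] F) (M M' : E →L[ℝ] G) :
    dist (L.prod M) (L'.prod M') = max (dist L L') (dist M M') := by
  rw [dist_eq_norm, prod_sub_prod, ContinuousLinearMap.opNorm_prod]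
  rw [Prod.norm_def, dist_eq_norm, dist_eq_norm]

end Aux

theorem isQDQ_prod {N n m : ℕ}
    {F : EuclideanSpace ℝ (Fin N) → Set (EuclideanSpace ℝ (Fin n))}
    {G : EuclideanSpace ℝ (Fin N) → Set (EuclideanSpace ℝ (Fin m))}
    {ΓF ΓG : Set (EuclideanSpace ℝ (Fin N))} {x₀ : EuclideanSpace ℝ (Fin N)}
    {yF : EuclideanSpace ℝ (Fin n)} {yG : EuclideanSpace ℝ (Fin m)}
    {ΛF : Set (EuclideanSpace ℝ (Fin N) →L[ℝ] EuclideanSpace ℝ (Fin n))}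
    {ΛG : Set (EuclideanSpace ℝ (Fin N) →L[ℝ] EuclideanSpace ℝ (Fin m))}
    (hF : IsQDQ ΛF F x₀ yF ΓF) (hG : IsQDQ ΛG G x₀ yG ΓG) :
    IsQDQ {T | ∃ L ∈ ΛF, ∃ M ∈ ΛG, T = L.prod M}
      (fun x => F x ×ˢ G x) x₀ (yF, yG) (ΓF ∩ ΓG) := by
  obtain ⟨hΛF, ρF, ⟨ρFmono, ρF0, ρFlim⟩, hFd⟩ := hF
  obtain ⟨hΛG, ρG, ⟨ρGmono, ρG0, ρGlim⟩, hGd⟩ := hG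
  constructor
  · have : {T | ∃ L ∈ ΛF, ∃ M ∈ ΛG, T = L.prod M}
        = (fun p : (_ →L[ℝ] _) × (_ →L[ℝ] _) => p.1.prod p.2) '' (ΛF ×ˢ ΛG) := by
      ext T
      simp only [Set.mem_setOf_eq, Set.mem_image, Set.mem_prod, Prod.exists]
      constructor
      · rintro ⟨L, hL, M, hM, rfl⟩; exact ⟨L, M, ⟨hL, hM⟩, rfl⟩
      · rintro ⟨L, M, ⟨hL, hM⟩, rfl⟩; exact ⟨L, hL, M, hM, rfl⟩
    rw [this]
    exact (hΛF.prod hΛG).image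
      ((ContinuousLinearMap.prodₗᵢ ℝ).isometry.continuous)
  · refine ⟨fun δ => ρF δ + ρG δ, ⟨?_, by simp [ρF0, ρG0], ?_⟩, ?_⟩
    · intro s t hs hst; exact add_le_add (ρFmono hs hst) (ρGmono hs hst)
    · simpa using ρFlim.add ρGlim
    · intro δ hδ hρ
      have hρF : ρF δ < ⊤ := lt_of_le_of_lt le_self_add hρ
      have hρG : ρG δ < ⊤ := lt_of_le_of_lt le_add_self hρ
      obtain ⟨LF, hFf, cF, pF⟩ := hFd δ hδ hρF
      obtain ⟨LG, hGf, cG, pG⟩ := hGd δ hδ hρG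
      refine ⟨fun x => (LF x).prod (LG x), fun x => (hFf x, hGf x), ?_, ?_⟩
      · have hsub1 : closedBall x₀ δ ∩ (ΓF ∩ ΓG) ⊆ closedBall x₀ δ ∩ ΓF := by
          intro x hx; exact ⟨hx.1, hx.2.1⟩
        have hsub2 : closedBall x₀ δ ∩ (ΓF ∩ ΓG) ⊆ closedBall x₀ δ ∩ ΓG := by
          intro x hx; exact ⟨hx.1, hx.2.2⟩
        have cLF : ContinuousOn LF (closedBall x₀ δ ∩ (ΓF ∩ ΓG)) :=
          ((continuous_fst.comp_continuousOn cF).mono hsub1)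
        have cLG : ContinuousOn LG (closedBall x₀ δ ∩ (ΓF ∩ ΓG)) :=
          ((continuous_fst.comp_continuousOn cG).mono hsub2)
        have chF : ContinuousOn hFf (closedBall x₀ δ ∩ (ΓF ∩ ΓG)) :=
          ((continuous_snd.comp_continuousOn cF).mono hsub1)
        have chG : ContinuousOn hGf (closedBall x₀ δ ∩ (ΓF ∩ ΓG)) :=
          ((continuous_snd.comp_continuousOn cG).mono hsub2)
        have cL : ContinuousOn (fun x => (LF x).prod (LG x))
            (closedBall x₀ δ ∩ (ΓF ∩ ΓG)) :=
          (ContinuousLinearMap.prodₗᵢ ℝ).isometry.continuous.comp_continuousOn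
            (cLF.prodMk cLG)
        exact cL.prodMk (chF.prodMk chG)
      · intro x hx
        have hxF : x ∈ closedBall x₀ δ ∩ ΓF := ⟨hx.1, hx.2.1⟩
        have hxG : x ∈ closedBall x₀ δ ∩ ΓG := ⟨hx.1, hx.2.2⟩
        obtain ⟨iF, nF, mF⟩ := pF x hxF
        obtain ⟨iG, nG, mG⟩ := pG x hxG
        have htr : (ρF δ + ρG δ).toReal = (ρF δ).toReal + (ρG δ).toReal :=
          ENNReal.toReal_add hρF.ne hρG.ne
        refine ⟨?_, ?_, ?_⟩
        · rw [htr]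
          rcases Set.eq_empty_or_nonempty
              ({T | ∃ L ∈ ΛF, ∃ M ∈ ΛG, T = L.prod M} :
                Set (_ →L[ℝ] EuclideanSpace ℝ (Fin n) × EuclideanSpace ℝ (Fin m)))
            with he | hne
          · rw [he, infDist_empty]
            positivity
          · refine le_of_forall_pos_le_add fun ε hε => ?_
            obtain ⟨T, hT⟩ := hne
            obtain ⟨L₀, hL₀, M₀, hM₀, rfl⟩ := hT
            have hFne : ΛF.Nonempty := ⟨L₀, hL₀⟩
            have hGne : ΛG.Nonempty := ⟨M₀, hM₀⟩
            obtain ⟨L₁, hL₁, dL₁⟩ := (infDist_lt_iff hFne).1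
              (lt_of_le_of_lt iF (lt_add_of_pos_right _ hε))
            obtain ⟨M₁, hM₁, dM₁⟩ := (infDist_lt_iff hGne).1
              (lt_of_le_of_lt iG (lt_add_of_pos_right _ hε))
            have hmem : L₁.prod M₁ ∈ {T | ∃ L ∈ ΛF, ∃ M ∈ ΛG, T = L.prod M} :=
              ⟨L₁, hL₁, M₁, hM₁, rfl⟩
            calc infDist ((LF x).prod (LG x)) _ ≤ dist ((LF x).prod (LG x)) (L₁.prod M₁) :=
                  infDist_le_dist_of_mem hmem
              _ = max (dist (LF x) L₁) (dist (LG x) M₁) := dist_prod_prod _ _ _ _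
              _ ≤ (ρF δ).toReal + (ρG δ).toReal + ε := by
                  refine max_le ?_ ?_
                  · have := le_of_lt dL₁
                    have h2 : (0:ℝ) ≤ (ρG δ).toReal := ENNReal.toReal_nonneg
                    linarith
                  · have := le_of_lt dM₁
                    have h1 : (0:ℝ) ≤ (ρF δ).toReal := ENNReal.toReal_nonneg
                    linarith
        · rw [htr, Prod.norm_def]
          refine max_le ?_ ?_
          · refine nF.trans ?_
            have : (0:ℝ) ≤ (ρG δ).toReal := ENNReal.toReal_nonneg
            nlinarith
          · refine nG.trans ?_
            have : (0:ℝ) ≤ (ρF δ).toReal := ENNReal.toReal_nonneg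
            nlinarith
        · exact ⟨mF, mG⟩
end

section
/- Sufficient criterion for QDQ: let F : ℝᴺ → ℝⁿ be continuous, Γ ⊆ ℝᴺ, x̄ ∈ Γ, and Λ ⊆ Lin(ℝᴺ, ℝⁿ) compact. If there exist ε̃ > 0 and a continuous map L : (x̄ + B_{ε̃}) ∩ Γ → Lin(ℝᴺ, ℝⁿ) such that dist(L(x), Λ) → 0 and |F(x) − F(x̄) − L(x)·(x − x̄)| / |x − x̄| → 0 as x → x̄ within Γ, then Λ is a QDQ of F at (x̄, F(x̄)) in the direction of Γ. -/
open Filter Topology Metric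
open scoped ENNReal NNReal

theorem isQDQ_criterion {N n : ℕ}
    {F : EuclideanSpace ℝ (Fin N) → EuclideanSpace ℝ (Fin n)}
    (hF : Continuous F)
    {Γ : Set (EuclideanSpace ℝ (Fin N))} {x₀ : EuclideanSpace ℝ (Fin N)}
    (hx₀ : x₀ ∈ Γ)
    {Λ : Set (EuclideanSpace ℝ (Fin N) →L[ℝ] EuclideanSpace ℝ (Fin n))}
    (hΛ : IsCompact Λ) {ε : ℝ} (hε : 0 < ε)
    {L : EuclideanSpace ℝ (Fin N) → (EuclideanSpace ℝ (Fin N) →L[ℝ] EuclideanSpace ℝ (Fin n))}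
    (hLcont : ContinuousOn L (closedBall x₀ ε ∩ Γ))
    (hdist : Tendsto (fun x => infDist (L x) Λ) (𝓝[Γ] x₀) (𝓝 0))
    (happrox : Tendsto (fun x => ‖F x - F x₀ - L x (x - x₀)‖ / ‖x - x₀‖)
      (𝓝[Γ \ {x₀}] x₀) (𝓝 0)) :
    IsQDQ Λ (fun x => {F x}) x₀ (F x₀) Γ := by
  set h' : EuclideanSpace ℝ (Fin N) → EuclideanSpace ℝ (Fin n) :=
    fun x => F x - F x₀ - L x (x - x₀) with hh'
  set r : EuclideanSpace ℝ (Fin N) → ℝ := fun x => ‖h' x‖ / ‖x - x₀‖ with hr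
  set φ : EuclideanSpace ℝ (Fin N) → ℝ≥0∞ :=
    fun x => ENNReal.ofReal (max (infDist (L x) Λ) (r x)) with hφ
  -- value at x₀
  have hdist0 : infDist (L x₀) Λ = 0 := by
    have h1 : Tendsto (fun x => infDist (L x) Λ) (pure x₀) (𝓝 0) :=
      hdist.mono_left (pure_le_nhdsWithin hx₀)
    exact tendsto_nhds_unique (tendsto_pure_nhds _ x₀) h1
  have hr0 : r x₀ = 0 := by simp [hr, hh']
  have hφ0 : φ x₀ = 0 := by simp [hφ, hdist0, hr0]
  set ρ : ℝ → ℝ≥0∞ := fun δ => if δ ≤ ε then ⨆ x ∈ closedBall x₀ δ ∩ Γ, φ x else ⊤ with hρ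
  refine ⟨hΛ, ρ, ⟨?_, ?_, ?_⟩, ?_⟩
  · -- monotone
    intro s t _ hst
    by_cases ht : t ≤ ε
    · simp only [hρ, if_pos (hst.trans ht), if_pos ht]
      exact biSup_mono fun x hx =>
        ⟨closedBall_subset_closedBall hst hx.1, hx.2⟩
    · simp [hρ, ht]
  · -- ρ 0 = 0
    simp only [hρ, if_pos hε.le]
    refine le_antisymm (iSup₂_le fun x hx => ?_) zero_le
    have : x = x₀ := by simpa using (mem_closedBall.1 hx.1)
    simp [this, hφ0]
  · -- tendsto 0
    rw [ENNReal.tendsto_nhds_zero]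
    intro c hc
    obtain ⟨b, hb0, hbc⟩ : ∃ b : ℝ, 0 < b ∧ ENNReal.ofReal b ≤ c := by
      rcases eq_or_ne c ⊤ with h | h
      · exact ⟨1, one_pos, by simp [h]⟩
      · exact ⟨c.toReal, ENNReal.toReal_pos hc.ne' h, by rw [ENNReal.ofReal_toReal h]⟩
    have e1 : ∀ᶠ x in 𝓝[Γ] x₀, infDist (L x) Λ < b := hdist.eventually_lt_const hb0
    have e2 : ∀ᶠ x in 𝓝[Γ \ {x₀}] x₀, r x < b := happrox.eventually_lt_const hb0
    rw [eventually_nhdsWithin_iff, Metric.eventually_nhds_iff] at e1 e2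
    obtain ⟨δ₁, hδ₁, H1⟩ := e1
    obtain ⟨δ₂, hδ₂, H2⟩ := e2
    have hmem : Set.Ioo (0:ℝ) (min ε (min δ₁ δ₂)) ∈ 𝓝[>] (0:ℝ) :=
      Ioo_mem_nhdsGT (lt_min hε (lt_min hδ₁ hδ₂))
    filter_upwards [hmem] with δ hδ
    have hδε : δ ≤ ε := (hδ.2.trans_le (min_le_left _ _)).le
    simp only [hρ, if_pos hδε]
    refine le_trans (iSup₂_le fun x hx => ?_) hbc
    have hxd : dist x x₀ ≤ δ := mem_closedBall.1 hx.1
    have hxd1 : dist x x₀ < δ₁ :=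
      hxd.trans_lt (hδ.2.trans_le ((min_le_right _ _).trans (min_le_left _ _)))
    have hxd2 : dist x x₀ < δ₂ :=
      hxd.trans_lt (hδ.2.trans_le ((min_le_right _ _).trans (min_le_right _ _)))
    have hinf : infDist (L x) Λ ≤ b := (H1 hxd1 hx.2).le
    have hrx : r x ≤ b := by
      by_cases hx0 : x = x₀
      · rw [hx0, hr0]; exact hb0.le
      · exact (H2 hxd2 ⟨hx.2, hx0⟩).le
    exact ENNReal.ofReal_le_ofReal (max_le hinf hrx)
  · -- main clause
    intro δ hδpos hρfin
    have hδε : δ ≤ ε := by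
      by_contra h
      simp only [hρ, if_neg h] at hρfin
      exact absurd hρfin (lt_irrefl _)
    have hsub : closedBall x₀ δ ∩ Γ ⊆ closedBall x₀ ε ∩ Γ := fun x hx =>
      ⟨closedBall_subset_closedBall hδε hx.1, hx.2⟩
    refine ⟨L, h', ?_, ?_⟩
    · have hL : ContinuousOn L (closedBall x₀ δ ∩ Γ) := hLcont.mono hsub
      have hh : ContinuousOn h' (closedBall x₀ δ ∩ Γ) := by
        rw [hh']
        exact (hF.continuousOn.sub continuousOn_const).sub
          (hL.clm_apply ((continuous_id.sub continuous_const).continuousOn))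
      exact hL.prodMk hh
    · intro x hx
      have hφle : φ x ≤ ρ δ := by
        simp only [hρ, if_pos hδε]
        exact le_iSup₂ (f := fun x (_ : x ∈ closedBall x₀ δ ∩ Γ) => φ x) x hx
      have hρne : ρ δ ≠ ⊤ := hρfin.ne
      have hmax : max (infDist (L x) Λ) (r x) ≤ (ρ δ).toReal :=
        (ENNReal.ofReal_le_iff_le_toReal hρne).1 hφle
      refine ⟨(le_max_left _ _).trans hmax, ?_, ?_⟩
      · by_cases hx0 : x = x₀
        · have hz : h' x = 0 := by simp [hh', hx0]
          rw [hz, norm_zero]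
          exact mul_nonneg hδpos.le ENNReal.toReal_nonneg
        · have hne : ‖x - x₀‖ ≠ 0 := by
            simp [sub_eq_zero, hx0]
          have hkey : ‖x - x₀‖ * r x = ‖h' x‖ := by
            rw [hr, mul_comm]
            exact div_mul_cancel₀ _ hne
          rw [← hkey]
          have hxd : ‖x - x₀‖ ≤ δ := by
            rw [← dist_eq_norm]; exact mem_closedBall.1 hx.1
          have hrnn : 0 ≤ r x := div_nonneg (norm_nonneg _) (norm_nonneg _)
          calc ‖x - x₀‖ * r x ≤ δ * r x := mul_le_mul_of_nonneg_right hxd hrnn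
            _ ≤ δ * (ρ δ).toReal :=
                mul_le_mul_of_nonneg_left ((le_max_right _ _).trans hmax) hδpos.le
      · simp only [Set.mem_singleton_iff, hh']
        abel
end

section
/- Gronwall estimate for mollified flows: let F : ℝ × ℝⁿ → ℝⁿ with F(s,·) Lipschitz of constant L_F(s) where ∫₀ˢ L_F = A < ∞ and F(·,y) bounded measurable, and let F_σ(t,y) := ∫ F(t, y−h) η_σ(h) dh be the spatial mollification. If y(·) solves y' = F(s,y), y(0) = ξ and y_σ(·) solves y' = F_σ(s,y), y(0) = ξ on [0,S], then |y_σ(s) − y(s)| ≤ (A + A² e^A) σ for all s ∈ [0,S]. -/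
open Filter Topology Metric MeasureTheory
open scoped ENNReal NNReal

noncomputable def stdBump {n : ℕ} (x : EuclideanSpace ℝ (Fin n)) : ℝ :=
  if ‖x‖ < 1 then Real.exp (-(1 / (1 - ‖x‖ ^ 2))) else 0

noncomputable def bumpConst (n : ℕ) : ℝ := ∫ x : EuclideanSpace ℝ (Fin n), stdBump x

noncomputable def stdMollifier {n : ℕ} (σ : ℝ) (h : EuclideanSpace ℝ (Fin n)) : ℝ :=
  (σ ^ n)⁻¹ * (stdBump (σ⁻¹ • h) / bumpConst n)

variable {n : ℕ}

lemma stdBump_nonneg (x : EuclideanSpace ℝ (Fin n)) : 0 ≤ stdBump x := by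
  unfold stdBump; split <;> positivity

lemma stdBump_le_one (x : EuclideanSpace ℝ (Fin n)) : stdBump x ≤ 1 := by
  unfold stdBump; split
  · rename_i h
    have h1 : 0 < 1 - ‖x‖ ^ 2 := by nlinarith [norm_nonneg x]
    have : 0 ≤ 1 / (1 - ‖x‖ ^ 2) := by positivity
    calc Real.exp (-(1 / (1 - ‖x‖ ^ 2))) ≤ Real.exp 0 := Real.exp_le_exp.2 (by linarith)
    _ = 1 := Real.exp_zero
  · norm_num

lemma stdBump_eq_zero {x : EuclideanSpace ℝ (Fin n)} (hx : 1 ≤ ‖x‖) : stdBump x = 0 := by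
  unfold stdBump; rw [if_neg (not_lt.2 hx)]

lemma measurable_stdBump : Measurable (stdBump (n := n)) := by
  unfold stdBump
  refine Measurable.ite (measurableSet_lt (by fun_prop) measurable_const) ?_ measurable_const
  fun_prop

lemma integrable_stdBump : Integrable (stdBump (n := n)) := by
  refine Integrable.mono' (g := (closedBall (0 : EuclideanSpace ℝ (Fin n)) 1).indicator
    (fun _ => (1:ℝ))) ?_ measurable_stdBump.aestronglyMeasurable ?_
  · exact (integrable_indicator_iff measurableSet_closedBall).2
      (integrableOn_const measure_closedBall_lt_top.ne)
  · refine Filter.Eventually.of_forall fun x => ?_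
    classical
    rw [Real.norm_of_nonneg (stdBump_nonneg x), Set.indicator_apply]
    split
    · exact stdBump_le_one x
    · rename_i h
      rw [stdBump_eq_zero]
      simp only [mem_closedBall, dist_zero_right] at h
      linarith [not_le.1 h]

lemma support_stdBump : Function.support (stdBump (n := n)) = ball 0 1 := by
  ext x
  simp only [Function.mem_support, mem_ball, dist_zero_right]
  constructor
  · intro h
    by_contra hx
    exact h (stdBump_eq_zero (not_lt.1 hx))
  · intro h
    unfold stdBump
    rw [if_pos h]
    positivity

lemma bumpConst_pos : 0 < bumpConst n := by
  rw [bumpConst, integral_pos_iff_support_of_nonneg stdBump_nonneg integrable_stdBump,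
    support_stdBump]
  exact measure_ball_pos _ _ one_pos

lemma stdMollifier_nonneg (σ : ℝ) (h : EuclideanSpace ℝ (Fin n)) (hσ : 0 < σ) :
    0 ≤ stdMollifier σ h := by
  unfold stdMollifier
  have := stdBump_nonneg (σ⁻¹ • h)
  have := bumpConst_pos (n := n)
  positivity

lemma measurable_stdMollifier (σ : ℝ) : Measurable (stdMollifier (n := n) σ) := by
  unfold stdMollifier
  exact (measurable_const.mul ((measurable_stdBump.comp (measurable_const_smul _)).div
    measurable_const))

lemma stdMollifier_eq_zero {σ : ℝ} (hσ : 0 < σ) {h : EuclideanSpace ℝ (Fin n)}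
    (hh : σ ≤ ‖h‖) : stdMollifier σ h = 0 := by
  unfold stdMollifier
  rw [stdBump_eq_zero, zero_div, mul_zero]
  rw [norm_smul, Real.norm_eq_abs, abs_inv, abs_of_pos hσ]
  rw [inv_mul_eq_div, le_div_iff₀ hσ, one_mul]
  exact hh

lemma integrable_stdMollifier {σ : ℝ} (hσ : 0 < σ) :
    Integrable (stdMollifier (n := n) σ) := by
  unfold stdMollifier
  have h1 : Integrable (fun h : EuclideanSpace ℝ (Fin n) => stdBump (σ⁻¹ • h)) :=
    integrable_stdBump.comp_smul (inv_ne_zero hσ.ne')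
  exact ((h1.div_const _).const_mul _)

lemma integral_stdMollifier {σ : ℝ} (hσ : 0 < σ) :
    ∫ h : EuclideanSpace ℝ (Fin n), stdMollifier σ h = 1 := by
  unfold stdMollifier
  rw [integral_const_mul]
  simp_rw [div_eq_mul_inv, integral_mul_const]
  rw [MeasureTheory.Measure.integral_comp_smul volume (stdBump (n := n)) σ⁻¹]
  rw [finrank_euclideanSpace_fin]
  rw [smul_eq_mul, ← bumpConst]
  have hb := bumpConst_pos (n := n)
  rw [inv_pow, inv_inv, abs_of_pos (by positivity)]
  field_simp

lemma norm_mul_stdMollifier_le {σ : ℝ} (hσ : 0 < σ) (h : EuclideanSpace ℝ (Fin n)) :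
    ‖h‖ * stdMollifier σ h ≤ σ * stdMollifier σ h := by
  rcases le_or_gt σ ‖h‖ with hh | hh
  · rw [stdMollifier_eq_zero hσ hh]; simp
  · exact mul_le_mul_of_nonneg_right hh.le (stdMollifier_nonneg σ h hσ)

lemma integrable_norm_mul_stdMollifier {σ : ℝ} (hσ : 0 < σ) :
    Integrable (fun h : EuclideanSpace ℝ (Fin n) => ‖h‖ * stdMollifier σ h) := by
  refine Integrable.mono' ((integrable_stdMollifier hσ).const_mul σ)
    ((measurable_norm.mul (measurable_stdMollifier σ)).aestronglyMeasurable)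
    (Filter.Eventually.of_forall fun h => ?_)
  rw [Real.norm_of_nonneg (mul_nonneg (norm_nonneg _) (stdMollifier_nonneg σ h hσ))]
  exact norm_mul_stdMollifier_le hσ h

lemma integral_norm_mul_stdMollifier_le {σ : ℝ} (hσ : 0 < σ) :
    ∫ h : EuclideanSpace ℝ (Fin n), ‖h‖ * stdMollifier σ h ≤ σ := by
  calc ∫ h : EuclideanSpace ℝ (Fin n), ‖h‖ * stdMollifier σ h
      ≤ ∫ h : EuclideanSpace ℝ (Fin n), σ * stdMollifier σ h :=
        integral_mono (integrable_norm_mul_stdMollifier hσ)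
          ((integrable_stdMollifier hσ).const_mul σ) (norm_mul_stdMollifier_le hσ)
  _ = σ := by rw [integral_const_mul, integral_stdMollifier hσ, mul_one]

section Key

variable {σ : ℝ} {L : ℝ≥0} {G : EuclideanSpace ℝ (Fin n) → EuclideanSpace ℝ (Fin n)}

lemma integrable_mollified_aux (hσ : 0 < σ) (hLip : LipschitzWith L G)
    (x : EuclideanSpace ℝ (Fin n)) :
    Integrable (fun h => stdMollifier σ h • G (x - h)) := by
  refine Integrable.mono' (((integrable_stdMollifier hσ).const_mul (‖G x‖ + L * σ)))
    ((measurable_stdMollifier σ).aestronglyMeasurable.smul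
      (hLip.continuous.comp (continuous_const.sub continuous_id)).aestronglyMeasurable)
    (Filter.Eventually.of_forall fun h => ?_)
  rw [norm_smul, Real.norm_of_nonneg (stdMollifier_nonneg σ h hσ)]
  rcases le_or_gt σ ‖h‖ with hh | hh
  · rw [stdMollifier_eq_zero hσ hh]; simp
  · have : ‖G (x - h) - G x‖ ≤ L * ‖h‖ := by
      simpa [dist_eq_norm, sub_sub_cancel_left, norm_neg] using hLip.dist_le_mul (x - h) x
    have h2 : (L : ℝ) * ‖h‖ ≤ L * σ := mul_le_mul_of_nonneg_left hh.le L.2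
    have h3 : ‖G (x - h)‖ ≤ ‖G x‖ + (L:ℝ) * σ := by
      calc ‖G (x - h)‖ ≤ ‖G x‖ + ‖G (x - h) - G x‖ := by
            simpa using norm_add_le (G x) (G (x - h) - G x)
      _ ≤ ‖G x‖ + L * σ := by linarith
    nlinarith [stdMollifier_nonneg σ h hσ]

lemma mollified_sub_le (hσ : 0 < σ) (hLip : LipschitzWith L G)
    (x x' : EuclideanSpace ℝ (Fin n)) :
    ‖(∫ h, stdMollifier σ h • G (x - h)) - G x'‖ ≤ L * (σ + ‖x - x'‖) := by
  have h1 : G x' = ∫ h : EuclideanSpace ℝ (Fin n), stdMollifier σ h • G x' := by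
    rw [integral_smul_const, integral_stdMollifier hσ, one_smul]
  rw [show (∫ h, stdMollifier σ h • G (x - h)) - G x'
      = ∫ h, (stdMollifier σ h • G (x - h) - stdMollifier σ h • G x') from by
    rw [integral_sub (integrable_mollified_aux hσ hLip x)
      ((integrable_stdMollifier hσ).smul_const _), ← h1]]
  have hint : Integrable (fun h : EuclideanSpace ℝ (Fin n) =>
      (L : ℝ) * (‖h‖ * stdMollifier σ h) + ((L : ℝ) * ‖x - x'‖) * stdMollifier σ h) :=
    ((integrable_norm_mul_stdMollifier hσ).const_mul _).add
      ((integrable_stdMollifier hσ).const_mul _)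
  refine le_trans (norm_integral_le_of_norm_le hint
    (Filter.Eventually.of_forall fun h => ?_)) ?_
  · rw [← smul_sub, norm_smul, Real.norm_of_nonneg (stdMollifier_nonneg σ h hσ)]
    have hd : ‖G (x - h) - G x'‖ ≤ L * (‖x - x'‖ + ‖h‖) := by
      have := hLip.dist_le_mul (x - h) x'
      rw [dist_eq_norm] at this
      have h2 : ‖x - h - x'‖ ≤ ‖x - x'‖ + ‖h‖ := by
        calc ‖x - h - x'‖ = ‖(x - x') + (-h)‖ := by rw [sub_right_comm, sub_eq_add_neg]
        _ ≤ ‖x - x'‖ + ‖h‖ := by simpa using norm_add_le (x - x') (-h)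
      calc ‖G (x - h) - G x'‖ ≤ L * ‖x - h - x'‖ := this
      _ ≤ L * (‖x - x'‖ + ‖h‖) := mul_le_mul_of_nonneg_left h2 L.2
    calc stdMollifier σ h * ‖G (x - h) - G x'‖
        ≤ stdMollifier σ h * ((L:ℝ) * (‖x - x'‖ + ‖h‖)) :=
          mul_le_mul_of_nonneg_left hd (stdMollifier_nonneg σ h hσ)
    _ = (L : ℝ) * (‖h‖ * stdMollifier σ h) + ((L : ℝ) * ‖x - x'‖) * stdMollifier σ h := by ring
  · rw [integral_add (((integrable_norm_mul_stdMollifier hσ)).const_mul _)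
      ((integrable_stdMollifier hσ).const_mul _), integral_const_mul, integral_const_mul,
      integral_stdMollifier hσ, mul_one]
    have := integral_norm_mul_stdMollifier_le (n := n) hσ
    have hL : (0:ℝ) ≤ L := L.2
    nlinarith [norm_nonneg (x - x')]

lemma mollified_lipschitz (hσ : 0 < σ) (hLip : LipschitzWith L G) :
    LipschitzWith L (fun x => ∫ h, stdMollifier σ h • G (x - h)) := by
  refine LipschitzWith.of_dist_le_mul fun x x' => ?_
  rw [dist_eq_norm, show (∫ h, stdMollifier σ h • G (x - h)) - ∫ h, stdMollifier σ h • G (x' - h)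
      = ∫ h, (stdMollifier σ h • G (x - h) - stdMollifier σ h • G (x' - h)) from
    (integral_sub (integrable_mollified_aux hσ hLip x)
      (integrable_mollified_aux hσ hLip x')).symm]
  refine le_trans (norm_integral_le_of_norm_le
    ((integrable_stdMollifier hσ).const_mul ((L : ℝ) * ‖x - x'‖))
    (Filter.Eventually.of_forall fun h => ?_)) ?_
  · rw [← smul_sub, norm_smul, Real.norm_of_nonneg (stdMollifier_nonneg σ h hσ)]
    have hd : ‖G (x - h) - G (x' - h)‖ ≤ L * ‖x - x'‖ := by
      have := hLip.dist_le_mul (x - h) (x' - h)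
      rw [dist_eq_norm] at this
      simpa [sub_sub_sub_cancel_right, dist_eq_norm] using this
    rw [mul_comm ((L:ℝ) * ‖x - x'‖)]
    exact mul_le_mul_of_nonneg_left hd (stdMollifier_nonneg σ h hσ)
  · rw [integral_const_mul, integral_stdMollifier hσ, mul_one, dist_eq_norm]

end Key

section Gronwall

open intervalIntegral Set

lemma gronwall_claim {S a σ : ℝ} {g φ : ℝ → ℝ} (hσ : 0 < σ) (ha : 0 ≤ a) (ha1 : a < 1)
    (hg0 : ∀ τ, 0 ≤ g τ) (hφ0 : ∀ τ, 0 ≤ φ τ)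
    (hgi : IntegrableOn g (Set.Icc 0 S))
    (hfi : IntegrableOn (fun τ => g τ * (σ + φ τ)) (Set.Icc 0 S))
    (hkey : ∀ s ∈ Set.Icc (0:ℝ) S, φ s ≤ ∫ τ in (0:ℝ)..s, g τ * (σ + φ τ)) :
    ∀ i : ℕ, ∀ s ∈ Set.Icc (0:ℝ) S, (∫ τ in (0:ℝ)..s, g τ) ≤ i * a →
      (∫ τ in (0:ℝ)..s, g τ * (σ + φ τ)) ≤ σ * ((1 - a)⁻¹ ^ (i + 1) - 1) := by
  have ha' : 0 < 1 - a := by linarith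
  set h : ℝ → ℝ := fun s => ∫ τ in (0:ℝ)..s, g τ * (σ + φ τ) with hh
  set G : ℝ → ℝ := fun s => ∫ τ in (0:ℝ)..s, g τ with hG
  have hgI : ∀ u v : ℝ, u ∈ Icc (0:ℝ) S → v ∈ Icc (0:ℝ) S → u ≤ v →
      IntervalIntegrable g volume u v := fun u v hu hv huv => by
    refine (hgi.mono_set ?_).intervalIntegrable
    rw [uIcc_of_le huv]; exact Icc_subset_Icc hu.1 hv.2
  have hfI : ∀ u v : ℝ, u ∈ Icc (0:ℝ) S → v ∈ Icc (0:ℝ) S → u ≤ v →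
      IntervalIntegrable (fun τ => g τ * (σ + φ τ)) volume u v := fun u v hu hv huv => by
    refine (hfi.mono_set ?_).intervalIntegrable
    rw [uIcc_of_le huv]; exact Icc_subset_Icc hu.1 hv.2
  have hmono : ∀ u v : ℝ, u ∈ Icc (0:ℝ) S → v ∈ Icc (0:ℝ) S → u ≤ v → h u ≤ h v := by
    intro u v hu hv huv
    have hsplit := integral_add_adjacent_intervals (hfI 0 u ⟨le_rfl, hu.1.trans hu.2⟩ hu hu.1)
      (hfI u v hu hv huv)
    have hpos : (0:ℝ) ≤ ∫ τ in u..v, g τ * (σ + φ τ) :=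
      intervalIntegral.integral_nonneg huv fun τ _ => by
        have := hg0 τ; have := hφ0 τ; positivity
    simp only [hh] at *
    linarith
  have hnonneg : ∀ s ∈ Icc (0:ℝ) S, 0 ≤ h s := fun s hs =>
    intervalIntegral.integral_nonneg hs.1 fun τ _ => by
      have := hg0 τ; have := hφ0 τ; positivity
  have step : ∀ s' s : ℝ, s' ∈ Icc (0:ℝ) S → s ∈ Icc (0:ℝ) S → s' ≤ s →
      (∫ τ in s'..s, g τ) ≤ a → (1 - a) * h s ≤ h s' + a * σ := by
    intro s' s hs' hs hss hGa
    have hsplit := integral_add_adjacent_intervals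
      (hfI 0 s' ⟨le_rfl, hs'.1.trans hs'.2⟩ hs' hs'.1) (hfI s' s hs' hs hss)
    have hb : (∫ τ in s'..s, g τ * (σ + φ τ)) ≤ ∫ τ in s'..s, g τ * (σ + h s) := by
      refine intervalIntegral.integral_mono_on hss (hfI s' s hs' hs hss)
        ((hgI s' s hs' hs hss).mul_const _) fun τ hτ => ?_
      have hτI : τ ∈ Icc (0:ℝ) S := ⟨hs'.1.trans hτ.1, hτ.2.trans hs.2⟩
      have h1 : φ τ ≤ h τ := hkey τ hτI
      have h2 : h τ ≤ h s := hmono τ s hτI hs hτ.2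
      have := hg0 τ
      nlinarith
    have hc : (∫ τ in s'..s, g τ * (σ + h s)) = (∫ τ in s'..s, g τ) * (σ + h s) :=
      intervalIntegral.integral_mul_const _ _
    have hd : (∫ τ in s'..s, g τ) * (σ + h s) ≤ a * (σ + h s) :=
      mul_le_mul_of_nonneg_right hGa (by have := hnonneg s hs; linarith)
    simp only [hh] at *
    linarith
  intro i
  induction i with
  | zero =>
    intro s hs hGs
    simp only [Nat.cast_zero, zero_mul] at hGs
    have h1 := step 0 s ⟨le_rfl, hs.1.trans hs.2⟩ hs hs.1 (le_trans hGs ha)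
    have h0 : h 0 = 0 := intervalIntegral.integral_same
    have : h s ≤ a * σ / (1 - a) := by rw [le_div_iff₀ ha']; linarith
    have heq : σ * ((1 - a)⁻¹ ^ (0 + 1) - 1) = a * σ / (1 - a) := by
      rw [zero_add, pow_one, eq_div_iff ha'.ne', mul_assoc, sub_mul, inv_mul_cancel₀ ha'.ne']
      ring
    rw [heq]
    exact this
  | succ i ih =>
    intro s hs hGs
    rcases le_or_gt (G s) (i * a) with hle | hlt
    · refine le_trans (ih s hs hle) ?_
      have hb1 : 1 ≤ (1 - a)⁻¹ := one_le_inv₀ ha' |>.2 (by linarith)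
      have h2 := pow_le_pow_right₀ hb1 (show i + 1 ≤ i + 1 + 1 by omega)
      have hσ' := hσ.le
      nlinarith
    · have hcont : ContinuousOn G (Icc 0 s) := by
        have h1 : IntegrableOn g (Set.uIcc (0:ℝ) s) volume := by
          rw [uIcc_of_le hs.1]; exact hgi.mono_set (Icc_subset_Icc le_rfl hs.2)
        have := intervalIntegral.continuousOn_primitive_interval h1
        rwa [uIcc_of_le hs.1] at this
      have hG0 : G 0 = 0 := intervalIntegral.integral_same
      have hmem : (i:ℝ) * a ∈ Icc (G 0) (G s) := by
        rw [hG0]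
        exact ⟨by positivity, hlt.le⟩
      obtain ⟨s', hs'mem, hGs'⟩ := intermediate_value_Icc hs.1 hcont hmem
      have hs'I : s' ∈ Icc (0:ℝ) S := ⟨hs'mem.1, hs'mem.2.trans hs.2⟩
      have hGdiff : (∫ τ in s'..s, g τ) ≤ a := by
        have hsplit := integral_add_adjacent_intervals
          (hgI 0 s' ⟨le_rfl, hs'I.1.trans hs'I.2⟩ hs'I hs'I.1) (hgI s' s hs'I hs hs'mem.2)
        push_cast at hGs
        simp only [hG] at *
        rw [hGs'] at hsplit
        linarith
      have hstep := step s' s hs'I hs hs'mem.2 hGdiff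
      have hih := ih s' hs'I (le_of_eq hGs')
      have hkeyid : (1 - a) * ((1 - a)⁻¹ ^ (i + 2)) = (1 - a)⁻¹ ^ (i + 1) := by
        rw [pow_succ']
        field_simp
      have hgoal : (1 - a) * h s ≤ (1 - a) * (σ * ((1 - a)⁻¹ ^ (i + 1 + 1) - 1)) := by
        have : (1 - a) * (σ * ((1 - a)⁻¹ ^ (i + 1 + 1) - 1))
            = σ * ((1 - a)⁻¹ ^ (i + 1) - 1) + a * σ := by
          have : ((1 - a)⁻¹ : ℝ) ^ (i + 1 + 1) = (1 - a)⁻¹ ^ (i + 2) := by norm_num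
          rw [this, mul_comm (1 - a), mul_assoc, ← hkeyid]
          ring
        rw [this]
        linarith
      have := mul_le_mul_of_nonneg_left (le_refl (h s)) ha'.le
      exact le_of_mul_le_mul_left (by linarith [hgoal]) ha'

end Gronwall

section Meas

variable {σ : ℝ} {LF : ℝ → ℝ≥0}
  {F : ℝ → EuclideanSpace ℝ (Fin n) → EuclideanSpace ℝ (Fin n)}

lemma meas_uncurry_F (hc : ∀ s, Continuous (F s)) (hm : ∀ x, Measurable fun s => F s x) :
    Measurable fun p : ℝ × EuclideanSpace ℝ (Fin n) => F p.1 p.2 := by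
  have := measurable_uncurry_of_continuous_of_measurable
    (u := fun (x : EuclideanSpace ℝ (Fin n)) (s : ℝ) => F s x) hc hm
  exact this.comp measurable_swap

lemma meas_param_mollified (hσ : 0 < σ) (hc : ∀ s, Continuous (F s))
    (hm : ∀ x, Measurable fun s => F s x) (x : EuclideanSpace ℝ (Fin n)) :
    Measurable fun τ => ∫ h, stdMollifier σ h • F τ (x - h) := by
  have hj : StronglyMeasurable fun p : ℝ × EuclideanSpace ℝ (Fin n) =>
      stdMollifier σ p.2 • F p.1 (x - p.2) := by
    apply Measurable.stronglyMeasurable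
    exact ((measurable_stdMollifier σ).comp measurable_snd).smul
      ((meas_uncurry_F hc hm).comp
        (measurable_fst.prodMk (measurable_const.sub measurable_snd)))
  exact hj.integral_prod_right'.measurable

lemma meas_uncurry_mollified (hσ : 0 < σ) (hLip : ∀ s, LipschitzWith (LF s) (F s))
    (hm : ∀ x, Measurable fun s => F s x) :
    Measurable fun p : ℝ × EuclideanSpace ℝ (Fin n) =>
      ∫ h, stdMollifier σ h • F p.1 (p.2 - h) := by
  have := measurable_uncurry_of_continuous_of_measurable
    (u := fun (x : EuclideanSpace ℝ (Fin n)) (τ : ℝ) => ∫ h, stdMollifier σ h • F τ (x - h))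
    (fun τ => (mollified_lipschitz hσ (hLip τ)).continuous)
    (fun x => meas_param_mollified hσ (fun s => (hLip s).continuous) hm x)
  exact this.comp measurable_swap

lemma aesm_comp_path {H : ℝ → EuclideanSpace ℝ (Fin n) → EuclideanSpace ℝ (Fin n)}
    (hH : Measurable fun p : ℝ × EuclideanSpace ℝ (Fin n) => H p.1 p.2)
    {w : ℝ → EuclideanSpace ℝ (Fin n)} {S : ℝ} (hw : ContinuousOn w (Set.Icc 0 S)) :
    AEStronglyMeasurable (fun τ => H τ (w τ)) (volume.restrict (Set.Icc 0 S)) := by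
  have hw' : AEMeasurable w (volume.restrict (Set.Icc 0 S)) :=
    hw.aemeasurable measurableSet_Icc
  exact (hH.comp_aemeasurable (aemeasurable_id.prodMk hw')).aestronglyMeasurable

end Meas

lemma exp_lt_aux {A : ℝ} (hA : 0 < A) : Real.exp A < 1 + A + A ^ 2 * Real.exp A := by
  have h1 : -A + 1 < Real.exp (-A) := Real.add_one_lt_exp (by linarith)
  have h2 : Real.exp (-A) * Real.exp A = 1 := by
    rw [← Real.exp_add]; simp
  have h3 : (0:ℝ) < Real.exp A := Real.exp_pos A
  have h4 : (1 - A) * Real.exp A < 1 := by nlinarith [mul_lt_mul_of_pos_right h1 h3]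
  have h5 : Real.exp A < 1 + A * Real.exp A := by nlinarith
  have h6 : A * Real.exp A < A * (1 + A * Real.exp A) := by
    exact mul_lt_mul_of_pos_left h5 hA
  nlinarith

lemma exists_good_N {A : ℝ} (hA : 0 < A) :
    ∃ N : ℕ, 0 < N ∧ A / N < 1 ∧
      (1 - A / N)⁻¹ ^ (N + 1) - 1 ≤ A + A ^ 2 * Real.exp A := by
  set c : ℝ := (1 + A + A ^ 2 * Real.exp A)⁻¹ with hc
  have hcpos : 0 < c := by
    rw [hc]
    have := Real.exp_pos A
    positivity
  have hthresh : c < Real.exp (-A) := by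
    rw [hc, Real.exp_neg]
    have h1 := exp_lt_aux hA
    have h2 : (0:ℝ) < Real.exp A := Real.exp_pos A
    rw [inv_lt_inv₀ (by nlinarith) h2]
    exact h1
  have hlim : Tendsto (fun N : ℕ => (1 + -A / N) ^ N * (1 + -A / N)) atTop
      (𝓝 (Real.exp (-A) * 1)) :=
    (Real.tendsto_one_add_div_pow_exp (-A)).mul
      (by simpa using tendsto_const_nhds.add (tendsto_const_div_atTop_nhds_zero_nat (-A)))
  have h1 : ∀ᶠ N : ℕ in atTop, c < (1 + -A / N) ^ N * (1 + -A / N) :=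
    hlim.eventually (eventually_gt_nhds (by rwa [mul_one]))
  have h2 : ∀ᶠ N : ℕ in atTop, A < (N : ℝ) :=
    tendsto_natCast_atTop_atTop.eventually_gt_atTop A
  obtain ⟨N, hN1, hN2⟩ := (h1.and h2).exists
  have hNpos : 0 < N := by
    by_contra hN
    push_neg at hN
    interval_cases N
    simp at hN2
    linarith
  have hNR : (0:ℝ) < N := by exact_mod_cast hNpos
  have ha1 : A / N < 1 := by rw [div_lt_one hNR]; exact hN2
  have ha0 : 0 < A / N := by positivity
  refine ⟨N, hNpos, ha1, ?_⟩
  have heq : (1 : ℝ) + -A / N = 1 - A / N := by ring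
  rw [heq] at hN1
  have hpow : c < (1 - A / N) ^ (N + 1) := by
    rw [pow_succ]
    exact hN1
  have hppos : (0:ℝ) < (1 - A / N) ^ (N + 1) := lt_trans hcpos hpow
  have : ((1 - A / N) ^ (N + 1))⁻¹ < c⁻¹ := by
    rw [inv_lt_inv₀ hppos hcpos]
    exact hpow
  rw [hc, inv_inv] at this
  rw [inv_pow]
  linarith

set_option maxHeartbeats 1000000 in
theorem gronwall_mollified_flow {n : ℕ} {S A σ : ℝ} (hS : 0 < S) (hσ : 0 < σ)
    {F : ℝ → EuclideanSpace ℝ (Fin n) → EuclideanSpace ℝ (Fin n)}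
    {LF : ℝ → ℝ≥0}
    (hLip : ∀ s, LipschitzWith (LF s) (F s))
    (hLFint : IntegrableOn (fun s => (LF s : ℝ)) (Set.Icc 0 S))
    (hA : ∫ s in Set.Icc (0:ℝ) S, (LF s : ℝ) = A)
    (hmeas : ∀ y, Measurable fun s => F s y)
    (hbdd : ∀ y, ∃ M, ∀ s, ‖F s y‖ ≤ M)
    {ξ : EuclideanSpace ℝ (Fin n)} {y yσ : ℝ → EuclideanSpace ℝ (Fin n)}
    (hycont : ContinuousOn y (Set.Icc 0 S)) (hyσcont : ContinuousOn yσ (Set.Icc 0 S))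
    (hy : ∀ s ∈ Set.Icc (0:ℝ) S, y s = ξ + ∫ τ in (0:ℝ)..s, F τ (y τ))
    (hyσ : ∀ s ∈ Set.Icc (0:ℝ) S,
      yσ s = ξ + ∫ τ in (0:ℝ)..s,
        ∫ h : EuclideanSpace ℝ (Fin n), stdMollifier σ h • F τ (yσ τ - h)) :
    ∀ s ∈ Set.Icc (0:ℝ) S, ‖yσ s - y s‖ ≤ (A + A ^ 2 * Real.exp A) * σ := by
  have hA0 : 0 ≤ A := by
    rw [← hA]
    exact setIntegral_nonneg measurableSet_Icc fun τ _ => (LF τ).2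
  set g : ℝ → ℝ := fun τ => (LF τ : ℝ) with hgdef
  set φ : ℝ → ℝ := fun τ => ‖yσ τ - y τ‖ with hφdef
  set Fs : ℝ → EuclideanSpace ℝ (Fin n) → EuclideanSpace ℝ (Fin n) :=
    fun τ x => ∫ h, stdMollifier σ h • F τ (x - h) with hFsdef
  have hg0 : ∀ τ, 0 ≤ g τ := fun τ => (LF τ).2
  have hφ0 : ∀ τ, 0 ≤ φ τ := fun τ => norm_nonneg _
  obtain ⟨M, hM⟩ := hbdd ξ
  obtain ⟨C, hC⟩ := isCompact_Icc.exists_bound_of_continuousOn (hycont.sub continuousOn_const)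
  obtain ⟨C', hC'⟩ := isCompact_Icc.exists_bound_of_continuousOn
    (hyσcont.sub (continuousOn_const (c := ξ)))
  have hyσ' : ∀ u ∈ Set.Icc (0:ℝ) S, yσ u = ξ + ∫ τ in (0:ℝ)..u, Fs τ (yσ τ) := by
    intro u hu
    rw [hFsdef]
    exact hyσ u hu
  have hclose : ∀ (τ : ℝ) (x x' : EuclideanSpace ℝ (Fin n)),
      ‖Fs τ x - F τ x'‖ ≤ g τ * (σ + ‖x - x'‖) := by
    intro τ x x'
    rw [hFsdef]
    exact mollified_sub_le hσ (hLip τ) x x'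
  have hFbound : ∀ (τ : ℝ) (x : EuclideanSpace ℝ (Fin n)), ‖F τ x‖ ≤ M + g τ * ‖x - ξ‖ := by
    intro τ x
    have h1 : ‖F τ x - F τ ξ‖ ≤ g τ * ‖x - ξ‖ := by
      simpa [dist_eq_norm] using (hLip τ).dist_le_mul x ξ
    have h3 := hM τ
    calc ‖F τ x‖ ≤ ‖F τ ξ‖ + ‖F τ x - F τ ξ‖ := by
          simpa using norm_add_le (F τ ξ) (F τ x - F τ ξ)
    _ ≤ M + g τ * ‖x - ξ‖ := by linarith
  have hFy_meas : AEStronglyMeasurable (fun τ => F τ (y τ)) (volume.restrict (Set.Icc 0 S)) :=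
    aesm_comp_path (meas_uncurry_F (fun s => (hLip s).continuous) hmeas) hycont
  have hFy_int : IntegrableOn (fun τ => F τ (y τ)) (Set.Icc 0 S) := by
    refine Integrable.mono' (g := fun τ => M + g τ * C)
      ((integrableOn_const measure_Icc_lt_top.ne).add (hLFint.mul_const C))
      hFy_meas ?_
    rw [ae_restrict_iff' measurableSet_Icc]
    refine Filter.Eventually.of_forall fun τ hτ => ?_
    have h2 := hC τ hτ
    have h4 := hFbound τ (y τ)
    have h5 : g τ * ‖y τ - ξ‖ ≤ g τ * C := mul_le_mul_of_nonneg_left h2 (hg0 τ)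
    show ‖F τ (y τ)‖ ≤ M + g τ * C
    linarith
  have hFσy_meas : AEStronglyMeasurable (fun τ => Fs τ (yσ τ))
      (volume.restrict (Set.Icc 0 S)) := by
    rw [hFsdef]
    exact aesm_comp_path (H := fun τ x => ∫ h, stdMollifier σ h • F τ (x - h))
      (meas_uncurry_mollified hσ hLip hmeas) hyσcont
  have hFσy_int : IntegrableOn (fun τ => Fs τ (yσ τ)) (Set.Icc 0 S) := by
    refine Integrable.mono' (g := fun τ => M + g τ * (C' + σ))
      ((integrableOn_const measure_Icc_lt_top.ne).add (hLFint.mul_const _))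
      hFσy_meas ?_
    rw [ae_restrict_iff' measurableSet_Icc]
    refine Filter.Eventually.of_forall fun τ hτ => ?_
    have h2 := hC' τ hτ
    have h4 := hFbound τ (yσ τ)
    have h6 : ‖Fs τ (yσ τ) - F τ (yσ τ)‖ ≤ g τ * (σ + 0) := by
      simpa using hclose τ (yσ τ) (yσ τ)
    have h7 : ‖Fs τ (yσ τ)‖ ≤ ‖F τ (yσ τ)‖ + g τ * (σ + 0) := by
      calc ‖Fs τ (yσ τ)‖ ≤ ‖F τ (yσ τ)‖ + ‖Fs τ (yσ τ) - F τ (yσ τ)‖ := by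
            simpa using norm_add_le (F τ (yσ τ)) (Fs τ (yσ τ) - F τ (yσ τ))
      _ ≤ ‖F τ (yσ τ)‖ + g τ * (σ + 0) := by linarith
    have h5 : g τ * ‖yσ τ - ξ‖ ≤ g τ * C' := mul_le_mul_of_nonneg_left h2 (hg0 τ)
    have h8 := hg0 τ
    show ‖Fs τ (yσ τ)‖ ≤ M + g τ * (C' + σ)
    nlinarith
  have hφcont : ContinuousOn φ (Set.Icc 0 S) := (hyσcont.sub hycont).norm
  have hfi : IntegrableOn (fun τ => g τ * (σ + φ τ)) (Set.Icc 0 S) := by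
    obtain ⟨Cφ, hCφ⟩ := isCompact_Icc.exists_bound_of_continuousOn hφcont
    refine Integrable.mono' (g := fun τ => g τ * (σ + Cφ)) (hLFint.mul_const _)
      (hLFint.aestronglyMeasurable.mul
        ((continuousOn_const.add hφcont).aestronglyMeasurable measurableSet_Icc)) ?_
    rw [ae_restrict_iff' measurableSet_Icc]
    refine Filter.Eventually.of_forall fun τ hτ => ?_
    have h1 := hCφ τ hτ
    rw [Real.norm_eq_abs] at h1
    have h2 := hφ0 τ
    have h3 := hg0 τ
    have h4 : φ τ ≤ Cφ := le_trans (le_abs_self _) h1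
    show ‖g τ * (σ + φ τ)‖ ≤ g τ * (σ + Cφ)
    rw [Real.norm_eq_abs, abs_of_nonneg (by positivity)]
    nlinarith
  have hkey : ∀ u ∈ Set.Icc (0:ℝ) S, φ u ≤ ∫ τ in (0:ℝ)..u, g τ * (σ + φ τ) := by
    intro u hu
    have hsub : Set.uIcc (0:ℝ) u ⊆ Set.Icc 0 S := by
      rw [Set.uIcc_of_le hu.1]; exact Set.Icc_subset_Icc le_rfl hu.2
    have hIσ : IntervalIntegrable (fun τ => Fs τ (yσ τ)) volume 0 u :=
      (hFσy_int.mono_set hsub).intervalIntegrable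
    have hIy : IntervalIntegrable (fun τ => F τ (y τ)) volume 0 u :=
      (hFy_int.mono_set hsub).intervalIntegrable
    have e1 : yσ u - y u = ∫ τ in (0:ℝ)..u, (Fs τ (yσ τ) - F τ (y τ)) := by
      rw [intervalIntegral.integral_sub hIσ hIy, hyσ' u hu, hy u hu]
      abel
    have e2 : φ u = ‖∫ τ in (0:ℝ)..u, (Fs τ (yσ τ) - F τ (y τ))‖ := by
      rw [hφdef]
      simp only []
      rw [e1]
    rw [e2]
    refine le_trans (intervalIntegral.norm_integral_le_integral_norm hu.1) ?_
    refine intervalIntegral.integral_mono_on hu.1 (hIσ.sub hIy).norm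
      ((hfi.mono_set hsub).intervalIntegrable) fun τ hτ => ?_
    exact hclose τ (yσ τ) (y τ)
  have hGle : ∀ u ∈ Set.Icc (0:ℝ) S, (∫ τ in (0:ℝ)..u, g τ) ≤ A := by
    intro u hu
    have hI1 : IntervalIntegrable g volume 0 u := (hLFint.mono_set (by
      rw [Set.uIcc_of_le hu.1]; exact Set.Icc_subset_Icc le_rfl hu.2)).intervalIntegrable
    have hI2 : IntervalIntegrable g volume u S := (hLFint.mono_set (by
      rw [Set.uIcc_of_le hu.2]; exact Set.Icc_subset_Icc hu.1 le_rfl)).intervalIntegrable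
    have hsplit := intervalIntegral.integral_add_adjacent_intervals hI1 hI2
    have h2 : (0:ℝ) ≤ ∫ τ in u..S, g τ :=
      intervalIntegral.integral_nonneg hu.2 fun τ _ => hg0 τ
    have hGS : (∫ τ in (0:ℝ)..S, g τ) = A := by
      rw [intervalIntegral.integral_of_le hS.le, ← MeasureTheory.integral_Icc_eq_integral_Ioc]
      exact hA
    linarith
  intro s hs
  have hmain : ∀ a : ℝ, 0 ≤ a → a < 1 → ∀ i : ℕ, A ≤ i * a →
      φ s ≤ σ * ((1 - a)⁻¹ ^ (i + 1) - 1) := by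
    intro a ha ha1 i hia
    exact le_trans (hkey s hs) (gronwall_claim hσ ha ha1 hg0 hφ0 hLFint hfi hkey i s hs
      (le_trans (hGle s hs) hia))
  rcases eq_or_lt_of_le hA0 with hA0' | hApos
  · have h1 := hmain 0 le_rfl one_pos 0 (by rw [← hA0']; norm_num)
    norm_num at h1
    rw [← hA0']
    norm_num
    exact norm_eq_zero.1 (le_antisymm h1 (hφ0 s))
  · obtain ⟨N, hN0, hN1, hN2⟩ := exists_good_N hApos
    have hNR : (0:ℝ) < N := by exact_mod_cast hN0
    have h1 := hmain (A / N) (by positivity) hN1 N (by rw [mul_div_assoc', mul_div_cancel_left₀ _ hNR.ne'])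
    calc φ s ≤ σ * ((1 - A / N)⁻¹ ^ (N + 1) - 1) := h1
    _ ≤ σ * (A + A ^ 2 * Real.exp A) := mul_le_mul_of_nonneg_left (by linarith) hσ.le
    _ = (A + A ^ 2 * Real.exp A) * σ := mul_comm _ _
end

section
/- Limit of solutions of a bounded linear differential inclusion: let B : [0,S] ⇝ Lin(ℝⁿ,ℝⁿ) and C : [0,S] ⇝ ℝⁿ be measurable set-valued maps with compact convex nonempty values, all contained in balls of radius R around the origin. Let p_n : [0,S] → (ℝⁿ)* be a sequence of absolutely continuous solutions of ṗ(s) ∈ p(s)B(s) + C(s) a.e., with |p_n(S)| ≤ 1 for all n. Then some subsequence of (p_n) converges uniformly on [0,S] to a function p, and p is also an absolutely continuous solution of the same differential inclusion. -/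
open Filter Topology MeasureTheory Set Pointwise

section Helpers

lemma sup_norm_le_eucl {n : ℕ} (x : EuclideanSpace ℝ (Fin n)) :
    ‖(WithLp.equiv 2 (Fin n → ℝ)) x‖ ≤ ‖x‖ := by
  apply pi_norm_le_iff_of_nonneg (norm_nonneg x) |>.2
  intro i
  rw [EuclideanSpace.norm_eq]
  have h1 : ‖x i‖ ^ 2 ≤ ∑ j, ‖x j‖ ^ 2 :=
    Finset.single_le_sum (f := fun j => ‖x j‖ ^ 2) (fun j _ => sq_nonneg _) (Finset.mem_univ i)
  have := Real.sqrt_le_sqrt h1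
  rwa [Real.sqrt_sq (norm_nonneg _)] at this

lemma eucl_norm_le_sup {n : ℕ} (x : EuclideanSpace ℝ (Fin n)) :
    ‖x‖ ≤ Real.sqrt n * ‖(WithLp.equiv 2 (Fin n → ℝ)) x‖ := by
  rw [EuclideanSpace.norm_eq]
  set M := ‖(WithLp.equiv 2 (Fin n → ℝ)) x‖ with hM
  have hM0 : 0 ≤ M := norm_nonneg _
  have h1 : ∑ j, ‖x j‖ ^ 2 ≤ n * M ^ 2 := by
    calc ∑ j : Fin n, ‖x j‖ ^ 2 ≤ ∑ _j : Fin n, M ^ 2 := by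
          apply Finset.sum_le_sum
          intro j _
          have : ‖x j‖ ≤ M := norm_le_pi_norm ((WithLp.equiv 2 (Fin n → ℝ)) x) j
          exact pow_le_pow_left₀ (norm_nonneg _) this 2
      _ = n * M ^ 2 := by simp [Finset.sum_const, mul_comm]
  calc Real.sqrt (∑ j, ‖x j‖ ^ 2) ≤ Real.sqrt (n * M ^ 2) := Real.sqrt_le_sqrt h1
    _ = Real.sqrt n * M := by
        rw [Real.sqrt_mul (Nat.cast_nonneg n), Real.sqrt_sq hM0]

lemma row_bound {n : ℕ} {R : ℝ} (hR : 0 ≤ R) (x : Fin n → ℝ) (M : Fin n → Fin n → ℝ)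
    (hM : ∀ i j, |M i j| ≤ R) :
    ‖(fun j => ∑ i, x i * M i j : Fin n → ℝ)‖ ≤ n * R * ‖x‖ := by
  apply pi_norm_le_iff_of_nonneg (by positivity) |>.2
  intro j
  calc ‖∑ i, x i * M i j‖ = |∑ i, x i * M i j| := rfl
    _ ≤ ∑ i, |x i * M i j| := Finset.abs_sum_le_sum_abs _ _
    _ ≤ ∑ _i : Fin n, ‖x‖ * R := by
        apply Finset.sum_le_sum
        intro i _
        rw [abs_mul]
        apply mul_le_mul _ (hM i j) (abs_nonneg _) (norm_nonneg x)
        exact norm_le_pi_norm x i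
    _ = n * R * ‖x‖ := by simp [Finset.sum_const]; ring

lemma row_mul_bound {n : ℕ} {R : ℝ} (hR : 0 ≤ R) (x : Fin n → ℝ) (M : Fin n → Fin n → ℝ)
    (c : Fin n → ℝ) (hM : ∀ i j, |M i j| ≤ R) (hc : ‖c‖ ≤ R) :
    ‖(fun j => ∑ i, x i * M i j) + c‖ ≤ n * R * ‖x‖ + R :=
  calc ‖(fun j => ∑ i, x i * M i j) + c‖ ≤ ‖(fun j => ∑ i, x i * M i j : Fin n → ℝ)‖ + ‖c‖ :=
        norm_add_le _ _
    _ ≤ n * R * ‖x‖ + R := add_le_add (row_bound hR x M hM) hc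

lemma combo_norm_le {F : Type*} [NormedAddCommGroup F] [NormedSpace ℝ F]
    {ι : Type*} [Fintype ι] {wt : ι → ℝ} (hnn : ∀ i, 0 ≤ wt i) (hsum : ∑ i, wt i = 1)
    {x : ι → F} {y : F} {r : ℝ} (hr : ∀ i, ‖x i - y‖ ≤ r) :
    ‖(∑ i, wt i • x i) - y‖ ≤ r := by
  have hy : (∑ i, wt i • y) = y := by
    rw [← Finset.sum_smul, hsum, one_smul]
  calc ‖(∑ i, wt i • x i) - y‖ = ‖∑ i, wt i • (x i - y)‖ := by
        congr 1
        conv_lhs => rw [← hy]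
        rw [← Finset.sum_sub_distrib]
        exact Finset.sum_congr rfl fun i _ => (smul_sub (wt i) (x i) y).symm
      _ ≤ ∑ i, ‖wt i • (x i - y)‖ := norm_sum_le _ _
      _ ≤ ∑ i, wt i * r := by
          apply Finset.sum_le_sum
          intro i _
          rw [norm_smul, Real.norm_eq_abs, abs_of_nonneg (hnn i)]
          exact mul_le_mul_of_nonneg_left (hr i) (hnn i)
      _ = r := by rw [← Finset.sum_mul, hsum, one_mul]

lemma mem_of_closed_approx {F : Type*} [NormedAddCommGroup F]
    {G : Set F} (hG : IsClosed G) (hne : G.Nonempty) {x : F} {y : ℕ → F} {r : ℕ → ℝ}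
    (hy : ∀ j, y j ∈ G + Metric.closedBall (0:F) (r j))
    (hr : Tendsto r atTop (𝓝 0)) (hx : Tendsto y atTop (𝓝 x)) : x ∈ G := by
  rw [hG.mem_iff_infDist_zero hne]
  have h1 : ∀ j, Metric.infDist x G ≤ dist x (y j) + r j := by
    intro j
    obtain ⟨g, hg, b, hb, hgb⟩ := Set.mem_add.1 (hy j)
    rw [mem_closedBall_zero_iff] at hb
    calc Metric.infDist x G ≤ dist x g := Metric.infDist_le_dist_of_mem hg
      _ ≤ dist x (y j) + dist (y j) g := dist_triangle _ _ _
      _ ≤ dist x (y j) + r j := by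
          apply add_le_add le_rfl
          rw [dist_eq_norm, show y j - g = b by rw [← hgb]; abel]
          exact hb
  have h2 : Tendsto (fun j => dist x (y j) + r j) atTop (𝓝 0) := by
    have := (tendsto_const_nhds (x := x)).dist hx
    simpa using this.add hr
  exact le_antisymm (ge_of_tendsto h2 (Eventually.of_forall h1)) Metric.infDist_nonneg

lemma Lp_coeFn_finset_sum {α E : Type*} [MeasurableSpace α] {μ : Measure α}
    [NormedAddCommGroup E] {p : ENNReal} {ι : Type*} (s : Finset ι) (f : ι → Lp E p μ) :
    ⇑(∑ i ∈ s, f i) =ᵐ[μ] fun x => ∑ i ∈ s, f i x := by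
  classical
  induction s using Finset.induction_on with
  | empty => simp only [Finset.sum_empty]; exact Lp.coeFn_zero E p μ
  | insert a t hne ih =>
    rw [Finset.sum_insert hne]
    filter_upwards [Lp.coeFn_add (f a) (∑ i ∈ t, f i), ih] with x h1 h2
    rw [h1]
    simp only [Pi.add_apply, h2, Finset.sum_insert hne]

end Helpers
section Gronwall
open intervalIntegral
lemma gronwall_integral {S a c : ℝ} (hS : 0 ≤ S) (ha : 0 < a) (hc : 0 ≤ c) {g : ℝ → ℝ}
    (hg : ContinuousOn g (Set.Icc 0 S))
    (hineq : ∀ t ∈ Set.Icc 0 S, g t ≤ c + a * ∫ σ in t..S, g σ) :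
    ∀ t ∈ Set.Icc 0 S, g t ≤ c * Real.exp (a * S) := by
  have hsub : ∀ t ∈ Set.Icc 0 S, ∀ t' ∈ Set.Icc 0 S, Set.uIcc t t' ⊆ Set.Icc 0 S := by
    intro t ht t' ht'
    exact Set.uIcc_subset_Icc ht ht'
  have gInt : ∀ t ∈ Set.Icc 0 S, ∀ t' ∈ Set.Icc 0 S, IntervalIntegrable g volume t t' :=
    fun t ht t' ht' => (hg.mono (hsub t ht t' ht')).intervalIntegrable
  have h0S : (0:ℝ) ∈ Set.Icc 0 S := Set.left_mem_Icc.2 hS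
  have hSS : S ∈ Set.Icc 0 S := Set.right_mem_Icc.2 hS
  set h : ℝ → ℝ := fun t => (∫ σ in (0:ℝ)..S, g σ) - ∫ σ in (0:ℝ)..t, g σ with hh
  have key : ∀ t ∈ Set.Icc 0 S, h t = ∫ σ in t..S, g σ := by
    intro t ht
    have := integral_add_adjacent_intervals (gInt 0 h0S t ht) (gInt t ht S hSS)
    simp only [hh]
    linarith
  set k := c / a with hk
  have hak : a * k = c := by
    rw [hk]; field_simp
  have hk0 : 0 ≤ k := div_nonneg hc ha.le
  set Φ : ℝ → ℝ := fun t => Real.exp (a * t) * (h t + k) with hΦ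
  have hderiv : ∀ t ∈ Set.Ioo (0:ℝ) S, HasDerivAt h (-(g t)) t := by
    intro t ht
    have hmem : Set.Icc (0:ℝ) S ∈ 𝓝 t := Icc_mem_nhds ht.1 ht.2
    have h1 : HasDerivAt (fun u => ∫ σ in (0:ℝ)..u, g σ) (g t) t := by
      apply integral_hasDerivAt_right (gInt 0 h0S t (Set.mem_Icc_of_Ioo ht))
      · exact ⟨Set.Icc 0 S, hmem, hg.aestronglyMeasurable measurableSet_Icc⟩
      · exact hg.continuousAt hmem
    have h2 := (hasDerivAt_const t (∫ σ in (0:ℝ)..S, g σ)).sub h1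
    rw [zero_sub] at h2
    exact h2
  have hcont : ContinuousOn h (Set.Icc 0 S) := by
    apply ContinuousOn.sub continuousOn_const
    have := intervalIntegral.continuousOn_primitive_interval (μ := volume) (a := 0) (b := S)
      (f := g) (by rw [Set.uIcc_of_le hS]; exact hg.integrableOn_Icc)
    rwa [Set.uIcc_of_le hS] at this
  have hΦcont : ContinuousOn Φ (Set.Icc 0 S) :=
    ((Real.continuous_exp.comp (continuous_const.mul continuous_id)).continuousOn).mul
      (hcont.add continuousOn_const)
  have hΦderiv : ∀ t ∈ Set.Ioo (0:ℝ) S, HasDerivAt Φ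
      (a * Real.exp (a * t) * (h t + k) + Real.exp (a * t) * (-(g t))) t := by
    intro t ht
    have e1 : HasDerivAt (fun u : ℝ => Real.exp (a * u)) (Real.exp (a * t) * a) t := by
      simpa using ((hasDerivAt_id t).const_mul a).exp
    have e2 : HasDerivAt (fun u => h u + k) (-(g t)) t := (hderiv t ht).add_const k
    have := e1.mul e2
    exact this.congr_deriv (by ring)
  have hΦmono : MonotoneOn Φ (Set.Icc 0 S) := by
    apply monotoneOn_of_deriv_nonneg (convex_Icc 0 S) hΦcont
    · intro t ht
      rw [interior_Icc] at ht
      exact ((hΦderiv t ht).differentiableAt).differentiableWithinAt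
    · intro t ht
      rw [interior_Icc] at ht
      rw [(hΦderiv t ht).deriv]
      have htIcc := Set.mem_Icc_of_Ioo ht
      have h4 := hineq t htIcc
      rw [← key t htIcc] at h4
      nlinarith [Real.exp_pos (a * t)]
  intro t ht
  have h2 : Φ t ≤ Φ S := hΦmono ht hSS ht.2
  have hS0 : h S = 0 := by rw [key S hSS, integral_same]
  have hexp1 : (1:ℝ) ≤ Real.exp (a * t) := by
    rw [← Real.exp_zero]
    exact Real.exp_le_exp.2 (mul_nonneg ha.le ht.1)
  have h2' : Real.exp (a * t) * (h t + k) ≤ Real.exp (a * S) * k := by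
    simpa [hΦ, hS0] using h2
  have h3 : h t + k ≤ Real.exp (a * S) * k := by
    rcases le_or_gt (h t + k) 0 with hneg | hpos
    · exact hneg.trans (by positivity)
    · calc h t + k ≤ Real.exp (a * t) * (h t + k) :=
            le_mul_of_one_le_left hpos.le hexp1
        _ ≤ Real.exp (a * S) * k := h2'
  have h4 := hineq t ht
  rw [← key t ht] at h4
  calc g t ≤ c + a * h t := h4
    _ = a * (h t + k) := by rw [mul_add, hak]; ring
    _ ≤ a * (Real.exp (a * S) * k) := mul_le_mul_of_nonneg_left h3 ha.le
    _ = c * Real.exp (a * S) := by rw [show a * (Real.exp (a * S) * k) = Real.exp (a * S) * (a * k) by ring, hak, mul_comm]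
end Gronwall

lemma exists_mem_iInter_closure_convexHull {H : Type*} [NormedAddCommGroup H]
    [InnerProductSpace ℝ H] [CompleteSpace H] (u : ℕ → H) {C : ℝ} (hu : ∀ k, ‖u k‖ ≤ C) :
    ∃ v : H, ∀ m : ℕ, v ∈ closure (convexHull ℝ (u '' Set.Ici m)) := by
  set D : ℕ → Set H := fun m => closure (convexHull ℝ (u '' Set.Ici m)) with hD
  have hDconv : ∀ m, Convex ℝ (D m) := fun m => (convex_convexHull ℝ _).closure
  have hDclosed : ∀ m, IsClosed (D m) := fun m => isClosed_closure
  have hDmem : ∀ m, u m ∈ D m := fun m =>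
    subset_closure (subset_convexHull ℝ _ (Set.mem_image_of_mem u (Set.mem_Ici.2 le_rfl)))
  have hDanti : ∀ {j m : ℕ}, j ≤ m → D m ⊆ D j := fun {j m} hjm =>
    closure_mono (convexHull_mono (Set.image_mono (f := u) (Set.Ici_subset_Ici.2 hjm)))
  have hC0 : 0 ≤ C := (norm_nonneg (u 0)).trans (hu 0)
  have hDbd : ∀ m, ∀ x ∈ D m, ‖x‖ ≤ C := by
    intro m x hx
    have h1 : D m ⊆ Metric.closedBall 0 C := by
      apply closure_minimal _ Metric.isClosed_closedBall
      apply convexHull_min _ (convex_closedBall 0 C)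
      rintro y ⟨k, -, rfl⟩
      simpa [Metric.mem_closedBall, dist_eq_norm] using hu k
    simpa [Metric.mem_closedBall, dist_eq_norm] using h1 hx
  -- minimal norm elements
  have hmin : ∀ m, ∃ w ∈ D m, ‖(0:H) - w‖ = ⨅ x : D m, ‖(0:H) - x‖ := fun m =>
    exists_norm_eq_iInf_of_complete_convex ⟨u m, hDmem m⟩ ((hDclosed m).isComplete) (hDconv m) 0
  choose v hvD hvmin using hmin
  set d : ℕ → ℝ := fun m => ‖v m‖ with hd
  have hdeq : ∀ m, d m = ⨅ x : D m, ‖(0:H) - x‖ := by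
    intro m
    rw [hd, ← hvmin m, zero_sub, norm_neg]
  have hbdd : ∀ m, ∀ x ∈ D m, d m ≤ ‖x‖ := by
    intro m x hx
    rw [hdeq m]
    have : BddBelow (Set.range fun x : D m => ‖(0:H) - x‖) :=
      ⟨0, by rintro y ⟨z, rfl⟩; positivity⟩
    have h2 := ciInf_le this (⟨x, hx⟩ : D m)
    simpa using h2
  have hdmono : Monotone d := by
    intro j m hjm
    exact hbdd j (v m) (hDanti hjm (hvD m))
  have hdC : ∀ m, d m ≤ C := fun m => (hbdd m (u m) (hDmem m)).trans (hu m)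
  have hbddA : BddAbove (Set.range d) := ⟨C, by rintro y ⟨m, rfl⟩; exact hdC m⟩
  set l := ⨆ m, d m with hl
  have hdl : ∀ m, d m ≤ l := fun m => le_ciSup hbddA m
  have hdtend : Tendsto d atTop (𝓝 l) := tendsto_atTop_ciSup hdmono hbddA
  have hd2tend : Tendsto (fun m => d m ^ 2) atTop (𝓝 (l ^ 2)) := hdtend.pow 2
  -- key estimate
  have hkey : ∀ {j m : ℕ}, j ≤ m → ‖v j - v m‖ ^ 2 ≤ 2 * d m ^ 2 - 2 * d j ^ 2 := by
    intro j m hjm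
    have hmid : (1/2 : ℝ) • v j + (1/2 : ℝ) • v m ∈ D j :=
      (hDconv j) (hvD j) (hDanti hjm (hvD m)) (by norm_num) (by norm_num) (by norm_num)
    have h1 : d j ≤ ‖(1/2 : ℝ) • v j + (1/2 : ℝ) • v m‖ := hbdd j _ hmid
    have h2 : ‖(1/2 : ℝ) • v j + (1/2 : ℝ) • v m‖ = ‖v j + v m‖ / 2 := by
      rw [← smul_add, norm_smul]
      simp [abs_of_nonneg]
      ring
    have hpar := parallelogram_law_with_norm ℝ (v j) (v m)
    have h3 : d j * 2 ≤ ‖v j + v m‖ := by rw [h2] at h1; linarith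
    have h4 : d m = ‖v m‖ := rfl
    have h5 : d j = ‖v j‖ := rfl
    have hdj0 : 0 ≤ d j := norm_nonneg _
    nlinarith [norm_nonneg (v j + v m), norm_nonneg (v j - v m)]
  have hcauchy : CauchySeq v := by
    rw [Metric.cauchySeq_iff']
    intro ε hε
    have : ∀ᶠ N in atTop, l ^ 2 - ε ^ 2 / 4 < d N ^ 2 :=
      hd2tend.eventually (eventually_gt_nhds (by nlinarith))
    obtain ⟨N, hN⟩ := this.exists
    refine ⟨N, fun m hm => ?_⟩
    have h1 := hkey hm
    have h2 : d m ≤ l := hdl m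
    have h3 : 0 ≤ d m := norm_nonneg _
    rw [dist_eq_norm]
    have h4 : ‖v m - v N‖ ^ 2 < ε ^ 2 := by
      rw [← neg_sub, norm_neg]
      nlinarith
    nlinarith [norm_nonneg (v m - v N)]
  obtain ⟨w, hw⟩ := cauchySeq_tendsto_of_complete hcauchy
  refine ⟨w, fun m => ?_⟩
  apply (hDclosed m).mem_of_tendsto hw
  filter_upwards [eventually_ge_atTop m] with j hj
  exact hDanti hj (hvD j)

lemma exists_subseq_tendstoUniformlyOn {n : ℕ} {S K L : ℝ} (hS : 0 < S) (hK : 0 ≤ K) (hL : 0 ≤ L)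
    (q : ℕ → ℝ → Fin n → ℝ)
    (hbd : ∀ k, ∀ t ∈ Set.Icc 0 S, ‖q k t‖ ≤ K)
    (hlip : ∀ k, ∀ t ∈ Set.Icc 0 S, ∀ t' ∈ Set.Icc 0 S, ‖q k t - q k t'‖ ≤ L * |t - t'|) :
    ∃ φ : ℕ → ℕ, StrictMono φ ∧ ∃ p : ℝ → Fin n → ℝ,
      TendstoUniformlyOn (fun k => q (φ k)) p atTop (Set.Icc 0 S) := by
  set A : Set C(Set.Icc (0:ℝ) S, Fin n → ℝ) :=
    {f | (∀ x, ‖f x‖ ≤ K) ∧ ∀ x y, dist (f x) (f y) ≤ L * dist x y} with hA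
  set R1 : Set (Set.Icc (0:ℝ) S → Fin n → ℝ) := ⋂ x, {f | ‖f x‖ ≤ K} with hR1
  set R2 : Set (Set.Icc (0:ℝ) S → Fin n → ℝ) :=
    ⋂ (x) (y), {f | dist (f x) (f y) ≤ L * dist x y} with hR2
  have himg : ContinuousMap.toFun '' A = R1 ∩ R2 := by
    apply Set.Subset.antisymm
    · rintro g ⟨f, hf, rfl⟩
      exact ⟨Set.mem_iInter.2 fun x => hf.1 x,
        Set.mem_iInter.2 fun x => Set.mem_iInter.2 fun y => hf.2 x y⟩
    · rintro g ⟨hg1, hg2⟩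
      rw [Set.mem_iInter] at hg1
      have hg2' : ∀ x y, dist (g x) (g y) ≤ L * dist x y := by
        intro x y
        exact Set.mem_iInter.1 (Set.mem_iInter.1 hg2 x) y
      have hcont : Continuous g :=
        (LipschitzWith.of_dist_le_mul (K := ⟨L, hL⟩) (by exact_mod_cast hg2')).continuous
      exact ⟨⟨g, hcont⟩, ⟨fun x => hg1 x, hg2'⟩, rfl⟩
  have hclosed : IsClosed (R1 ∩ R2) := by
    apply IsClosed.inter
    · exact isClosed_iInter fun x =>
        isClosed_le ((continuous_apply x).norm) continuous_const
    · exact isClosed_iInter fun x => isClosed_iInter fun y =>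
        isClosed_le ((continuous_apply x).dist (continuous_apply y)) continuous_const
  have hsub : R1 ∩ R2 ⊆ Set.univ.pi
      (fun _ : Set.Icc (0:ℝ) S => Metric.closedBall (0 : Fin n → ℝ) K) := by
    rintro g ⟨hg1, -⟩ x -
    rw [Set.mem_iInter] at hg1
    simpa [Metric.mem_closedBall, dist_eq_norm] using hg1 x
  have hcompactRHS : IsCompact (R1 ∩ R2) :=
    (isCompact_univ_pi fun _ => isCompact_closedBall 0 K).of_isClosed_subset hclosed hsub
  have hequi : Equicontinuous (fun f : A => ⇑(f : C(Set.Icc (0:ℝ) S, Fin n → ℝ))) := by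
    apply Metric.uniformEquicontinuous_of_continuity_modulus (fun δ => L * δ)
      (by have h0 := (continuous_const.mul continuous_id : Continuous fun δ : ℝ => L * δ).tendsto' 0 (L * 0) rfl; rw [mul_zero] at h0; exact h0)
      (fun f : A => ⇑(f : C(Set.Icc (0:ℝ) S, Fin n → ℝ))) (fun x y f => f.2.2 x y) |>.equicontinuous
  have hAcompact : IsCompact A := by
    apply ArzelaAscoli.isCompact_of_equicontinuous A _ hequi
    rw [himg]; exact hcompactRHS
  have hqlip : ∀ k, ∀ x y : Set.Icc (0:ℝ) S, dist (q k x) (q k y) ≤ L * dist x y := by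
    intro k x y
    rw [Subtype.dist_eq, dist_eq_norm, Real.dist_eq]
    exact hlip k x x.2 y y.2
  set fk : ℕ → C(Set.Icc (0:ℝ) S, Fin n → ℝ) := fun k =>
    ⟨fun x => q k x,
      (LipschitzWith.of_dist_le_mul (K := ⟨L, hL⟩) (by exact_mod_cast hqlip k)).continuous⟩
    with hfk
  have hfkA : ∀ k, fk k ∈ A := fun k => ⟨fun x => hbd k x x.2, hqlip k⟩
  obtain ⟨f, hfA, φ, hφmono, hφconv⟩ := hAcompact.tendsto_subseq hfkA
  rw [ContinuousMap.tendsto_iff_tendstoUniformly] at hφconv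
  refine ⟨φ, hφmono, fun t => f (Set.projIcc 0 S hS.le t), ?_⟩
  rw [tendstoUniformlyOn_iff_tendstoUniformly_comp_coe]
  have h2 : ((fun t => f (Set.projIcc 0 S hS.le t)) ∘ (Subtype.val : Set.Icc (0:ℝ) S → ℝ)) = ⇑f := by
    funext x
    simp [Set.projIcc_val]
  rw [h2]
  exact hφconv

lemma sol_bounds {n : ℕ} {S R : ℝ} (hS : 0 < S) (hR : 0 < R)
    {B : ℝ → Set (Fin n → Fin n → ℝ)} {C : ℝ → Set (Fin n → ℝ)}
    (hB : ∀ s ∈ Set.Icc (0:ℝ) S, ∀ M ∈ B s, ∀ i j, |M i j| ≤ R)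
    (hC : ∀ s ∈ Set.Icc (0:ℝ) S, ∀ c ∈ C s, ‖c‖ ≤ R)
    {p v : ℝ → Fin n → ℝ}
    (hvInt : IntervalIntegrable v volume 0 S)
    (hvMem : ∀ᵐ s ∂(volume.restrict (Set.Icc 0 S)),
      ∃ M ∈ B s, ∃ c ∈ C s, v s = (fun j => ∑ i, p s i * M i j) + c)
    (hpInt : ∀ t ∈ Set.Icc (0:ℝ) S, p t = p 0 + ∫ σ in (0:ℝ)..t, v σ)
    (hp1 : ‖p S‖ ≤ 1) :
    (∀ t ∈ Set.Icc (0:ℝ) S, ‖p t‖ ≤ (1 + R*S) * Real.exp ((n*R+1) * S)) ∧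
    (∀ᵐ s ∂(volume.restrict (Set.Icc 0 S)),
      ‖v s‖ ≤ (n*R+1) * ((1 + R*S) * Real.exp ((n*R+1)*S)) + R) ∧
    (∀ t ∈ Set.Icc (0:ℝ) S, ∀ t' ∈ Set.Icc (0:ℝ) S,
      ‖p t - p t'‖ ≤ ((n*R+1) * ((1 + R*S) * Real.exp ((n*R+1)*S)) + R) * |t - t'|) := by
  set a : ℝ := n*R+1 with ha
  have ha0 : 0 < a := by positivity
  set Kb : ℝ := (1 + R*S) * Real.exp (a * S) with hKb
  set L : ℝ := a * Kb + R with hL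
  have hS0 : (0:ℝ) ∈ Set.Icc (0:ℝ) S := Set.left_mem_Icc.2 hS.le
  have hSS : S ∈ Set.Icc (0:ℝ) S := Set.right_mem_Icc.2 hS.le
  -- subinterval integrability
  have hvsub : ∀ t ∈ Set.Icc (0:ℝ) S, ∀ t' ∈ Set.Icc (0:ℝ) S, IntervalIntegrable v volume t t' := by
    intro t ht t' ht'
    apply hvInt.mono_set
    rw [Set.uIcc_of_le hS.le]
    exact Set.uIcc_subset_Icc ht ht'
  -- p is continuous on Icc
  have hpc : ContinuousOn p (Set.Icc 0 S) := by
    apply ContinuousOn.congr (f := fun t => p 0 + ∫ σ in (0:ℝ)..t, v σ) _ hpInt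
    apply ContinuousOn.add continuousOn_const
    have h1 : IntegrableOn v (Set.uIcc 0 S) volume := by
      rw [Set.uIcc_of_le hS.le]
      rwa [intervalIntegrable_iff_integrableOn_Icc_of_le hS.le] at hvInt
    have := intervalIntegral.continuousOn_primitive_interval h1
    rwa [Set.uIcc_of_le hS.le] at this
  have hgc : ContinuousOn (fun t => ‖p t‖) (Set.Icc 0 S) := hpc.norm
  -- a.e. bound of v in terms of p
  have hvb : ∀ᵐ s ∂(volume.restrict (Set.Icc 0 S)), ‖v s‖ ≤ a * ‖p s‖ + R := by
    have hmem : ∀ᵐ s ∂(volume.restrict (Set.Icc 0 S)), s ∈ Set.Icc (0:ℝ) S :=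
      ae_restrict_mem measurableSet_Icc
    filter_upwards [hvMem, hmem] with s hs hsI
    obtain ⟨M, hM, c, hc, hrep⟩ := hs
    rw [hrep]
    calc ‖(fun j => ∑ i, p s i * M i j) + c‖ ≤ n * R * ‖p s‖ + R :=
          row_mul_bound hR.le _ _ _ (hB s hsI M hM) (hC s hsI c hc)
      _ ≤ a * ‖p s‖ + R := by
          have : (n:ℝ) * R ≤ a := by rw [ha]; linarith
          nlinarith [norm_nonneg (p s)]
  -- Gronwall inequality hypothesis
  have hineq : ∀ t ∈ Set.Icc (0:ℝ) S, ‖p t‖ ≤ (1 + R*S) + a * ∫ σ in t..S, ‖p σ‖ := by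
    intro t ht
    have hsplit : p S - p t = ∫ σ in t..S, v σ := by
      rw [hpInt S hSS, hpInt t ht]
      have := intervalIntegral.integral_add_adjacent_intervals (hvsub 0 hS0 t ht) (hvsub t ht S hSS)
      rw [← this]
      abel
    have h2 : ‖p t‖ ≤ ‖p S‖ + ‖∫ σ in t..S, v σ‖ := by
      rw [← hsplit]
      have := norm_sub_le (p S) (p S - p t)
      simpa using this
    have hIb : ∀ᵐ σ ∂(volume.restrict (Set.uIoc t S)), ‖v σ‖ ≤ a * ‖p σ‖ + R := by
      apply ae_restrict_of_ae_restrict_of_subset _ hvb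
      rw [Set.uIoc_of_le ht.2]
      exact (Set.Ioc_subset_Icc_self).trans (Set.Icc_subset_Icc ht.1 le_rfl)
    have hgint : IntervalIntegrable (fun σ => a * ‖p σ‖ + R) volume t S := by
      apply ContinuousOn.intervalIntegrable
      apply ContinuousOn.add (ContinuousOn.mul continuousOn_const _) continuousOn_const
      apply hgc.mono
      rw [Set.uIcc_of_le ht.2]
      exact Set.Icc_subset_Icc ht.1 le_rfl
    have h3 := intervalIntegral.norm_integral_le_abs_of_norm_le hIb hgint
    have hg1 : IntervalIntegrable (fun σ => a * ‖p σ‖) volume t S := by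
      apply ContinuousOn.intervalIntegrable
      apply ContinuousOn.mul continuousOn_const
      apply hgc.mono
      rw [Set.uIcc_of_le ht.2]
      exact Set.Icc_subset_Icc ht.1 le_rfl
    have h4 : ∫ σ in t..S, (a * ‖p σ‖ + R) =
        a * (∫ σ in t..S, ‖p σ‖) + (S - t) * R := by
      rw [intervalIntegral.integral_add hg1 intervalIntegrable_const,
        intervalIntegral.integral_const_mul, intervalIntegral.integral_const, smul_eq_mul]
    have h5 : 0 ≤ ∫ σ in t..S, (a * ‖p σ‖ + R) := by
      apply intervalIntegral.integral_nonneg ht.2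
      intro u _
      positivity
    have h6 : (S - t) * R ≤ S * R := by nlinarith [ht.1]
    rw [abs_of_nonneg h5, h4] at h3
    nlinarith [h2, h3]
  have part1 := gronwall_integral hS.le ha0 (by positivity) hgc hineq
  refine ⟨part1, ?_, ?_⟩
  · filter_upwards [hvb, ae_restrict_mem measurableSet_Icc] with s hs hsI
    have := part1 s hsI
    rw [hL, hKb]
    nlinarith [ha0]
  · intro t ht t' ht'
    have hsplit : p t - p t' = ∫ σ in t'..t, v σ := by
      rw [hpInt t ht, hpInt t' ht']
      have := intervalIntegral.integral_add_adjacent_intervals (hvsub 0 hS0 t' ht') (hvsub t' ht' t ht)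
      rw [← this]
      abel
    have hIb : ∀ᵐ σ ∂(volume.restrict (Set.uIoc t' t)), ‖v σ‖ ≤ L := by
      have hvb2 : ∀ᵐ s ∂(volume.restrict (Set.Icc 0 S)), ‖v s‖ ≤ L := by
        filter_upwards [hvb, ae_restrict_mem measurableSet_Icc] with s hs hsI
        have := part1 s hsI
        rw [hL, hKb]
        nlinarith [ha0]
      apply ae_restrict_of_ae_restrict_of_subset _ hvb2
      exact (Set.uIoc_subset_uIcc).trans (Set.uIcc_subset_Icc ht' ht)
    have h3 := intervalIntegral.norm_integral_le_abs_of_norm_le hIb intervalIntegrable_const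
    rw [intervalIntegral.integral_const, smul_eq_mul, abs_mul] at h3
    have hL0 : 0 ≤ L := by rw [hL, hKb]; positivity
    rw [hsplit]
    calc ‖∫ σ in t'..t, v σ‖ ≤ |t - t'| * |L| := h3
      _ = L * |t - t'| := by rw [abs_of_nonneg hL0]; ring
section RowLM

variable {n : ℕ}

/-- row-vector–matrix multiplication as a linear map in the matrix. -/
def rowMulLM (x : Fin n → ℝ) : (Fin n → Fin n → ℝ) →ₗ[ℝ] (Fin n → ℝ) where
  toFun M := fun j => ∑ i, x i * M i j
  map_add' M N := by
    funext j
    simp [mul_add, Finset.sum_add_distrib]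
  map_smul' r M := by
    funext j
    simp only [Pi.smul_apply, smul_eq_mul, RingHom.id_apply]
    rw [Finset.mul_sum]
    exact Finset.sum_congr rfl fun i _ => by ring

end RowLM

/-- `p` is an (absolutely continuous, in integral form) solution on `[0,S]` of the
differential inclusion `ṗ(s) ∈ p(s)·B(s) + C(s)`, where matrices are represented
as elements of `Fin n → Fin n → ℝ` and `p(s)·M` is the row-vector–matrix product. -/
def IsSolInclusion {n : ℕ} (S : ℝ) (B : ℝ → Set (Fin n → Fin n → ℝ))
    (C : ℝ → Set (Fin n → ℝ)) (p : ℝ → Fin n → ℝ) : Prop :=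
  ∃ v : ℝ → Fin n → ℝ, IntervalIntegrable v volume 0 S ∧
    (∀ᵐ s ∂(volume.restrict (Set.Icc 0 S)),
      ∃ M ∈ B s, ∃ c ∈ C s, v s = (fun j => ∑ i, p s i * M i j) + c) ∧
    ∀ t ∈ Set.Icc (0:ℝ) S, p t = p 0 + ∫ σ in (0:ℝ)..t, v σ

theorem limit_of_solutions_of_linear_inclusion {n : ℕ} {S R : ℝ} (hS : 0 < S)
    (hR : 0 < R)
    {B : ℝ → Set (Fin n → Fin n → ℝ)} {C : ℝ → Set (Fin n → ℝ)}
    (hBmeas : MeasurableSet {q : ℝ × (Fin n → Fin n → ℝ) | q.2 ∈ B q.1})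
    (hCmeas : MeasurableSet {q : ℝ × (Fin n → ℝ) | q.2 ∈ C q.1})
    (hB : ∀ s ∈ Set.Icc (0:ℝ) S, IsCompact (B s) ∧ Convex ℝ (B s) ∧ (B s).Nonempty
      ∧ ∀ M ∈ B s, ∀ i j, |M i j| ≤ R)
    (hC : ∀ s ∈ Set.Icc (0:ℝ) S, IsCompact (C s) ∧ Convex ℝ (C s) ∧ (C s).Nonempty
      ∧ ∀ c ∈ C s, ‖c‖ ≤ R)
    {pseq : ℕ → ℝ → Fin n → ℝ}
    (hsol : ∀ k, IsSolInclusion S B C (pseq k))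
    (hbd : ∀ k, ‖pseq k S‖ ≤ 1) :
    ∃ φ : ℕ → ℕ, StrictMono φ ∧ ∃ p : ℝ → Fin n → ℝ,
      TendstoUniformlyOn (fun k => pseq (φ k)) p atTop (Set.Icc 0 S) ∧
      IsSolInclusion S B C p := by
  classical
  choose v hvInt hvMem hpInt using hsol
  have hBbd : ∀ s ∈ Set.Icc (0:ℝ) S, ∀ M ∈ B s, ∀ i j, |M i j| ≤ R := fun s hs => (hB s hs).2.2.2
  have hCbd : ∀ s ∈ Set.Icc (0:ℝ) S, ∀ c ∈ C s, ‖c‖ ≤ R := fun s hs => (hC s hs).2.2.2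
  have hbds := fun k => sol_bounds hS hR hBbd hCbd (hvInt k) (hvMem k) (hpInt k) (hbd k)
  set a : ℝ := ↑n*R+1 with ha
  set Kb : ℝ := (1 + R*S) * Real.exp (a * S) with hKb
  set L : ℝ := a * Kb + R with hLdef
  have hnR : (0:ℝ) ≤ ↑n*R := mul_nonneg (Nat.cast_nonneg n) hR.le
  have ha0 : 0 < a := by rw [ha]; linarith
  have hKb0 : 0 ≤ Kb := by
    rw [hKb]
    have : (0:ℝ) ≤ 1 + R*S := by nlinarith
    exact mul_nonneg this (Real.exp_pos _).le
  have hL0 : 0 ≤ L := by rw [hLdef]; nlinarith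
  -- Arzelà–Ascoli
  obtain ⟨φ₁, hφ₁, p, hunif⟩ := exists_subseq_tendstoUniformlyOn hS hKb0 hL0 pseq
      (fun k t ht => (hbds k).1 t ht) (fun k t ht t' ht' => (hbds k).2.2 t ht t' ht')
  rw [Metric.tendstoUniformlyOn_iff] at hunif
  obtain ⟨ψ, hψ, hrate⟩ := Filter.extraction_forall_of_eventually
      (P := fun j k => ∀ x ∈ Set.Icc (0:ℝ) S, dist (p x) (pseq (φ₁ k) x) < (1/2:ℝ)^j)
      (fun j => hunif ((1/2)^j) (by positivity))
  set φ : ℕ → ℕ := fun k => φ₁ (ψ k) with hφdef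
  have hφmono : StrictMono φ := hφ₁.comp hψ
  refine ⟨φ, hφmono, p, ?_, ?_⟩
  · rw [Metric.tendstoUniformlyOn_iff]
    intro ε hε
    exact hψ.tendsto_atTop.eventually (hunif ε hε)
  -- the chosen subsequence
  set q : ℕ → ℝ → Fin n → ℝ := fun k => pseq (φ k) with hqdef
  set w : ℕ → ℝ → Fin n → ℝ := fun k => v (φ k) with hwdef
  have hrate' : ∀ k, ∀ x ∈ Set.Icc (0:ℝ) S, dist (p x) (q k x) < (1/2:ℝ)^k := fun k => hrate k
  have h2lt : ∀ m k : ℕ, m ≤ k → ((1:ℝ)/2)^k ≤ (1/2)^m := fun m k h =>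
    pow_le_pow_of_le_one (by norm_num) (by norm_num) h
  have hpKb : ∀ t ∈ Set.Icc (0:ℝ) S, ‖p t‖ ≤ Kb := by
    intro t ht
    have h1 : ∀ k, ‖p t‖ ≤ Kb + (1/2:ℝ)^k := by
      intro k
      have hr1 := hrate' k t ht
      have h2 := (hbds (φ k)).1 t ht
      rw [dist_eq_norm] at hr1
      calc ‖p t‖ = ‖q k t + (p t - q k t)‖ := by congr 1; abel
        _ ≤ ‖q k t‖ + ‖p t - q k t‖ := norm_add_le _ _
        _ ≤ Kb + (1/2:ℝ)^k := add_le_add h2 hr1.le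
    have h2 : Filter.Tendsto (fun k : ℕ => Kb + (1/2:ℝ)^k) atTop (𝓝 Kb) := by
      have := tendsto_pow_atTop_nhds_zero_of_lt_one (r := (1/2:ℝ)) (by norm_num) (by norm_num)
      simpa using tendsto_const_nhds.add this
    exact ge_of_tendsto h2 (Filter.Eventually.of_forall h1)
  -- the L² setup
  set μ : Measure ℝ := volume.restrict (Set.Icc 0 S) with hμ
  haveI : IsFiniteMeasure μ := by
    constructor
    rw [hμ, Measure.restrict_apply_univ, Real.volume_Icc]
    exact ENNReal.ofReal_lt_top
  have hrestIoc : volume.restrict (Set.Ioc (0:ℝ) S) = μ :=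
    Measure.restrict_congr_set MeasureTheory.Ioc_ae_eq_Icc
  set cle := PiLp.continuousLinearEquiv 2 ℝ (fun _ : Fin n => ℝ) with hcle
  set u : ℕ → ℝ → EuclideanSpace ℝ (Fin n) := fun k s => cle.symm (w k s) with hudef
  have hwmeas : ∀ k, AEStronglyMeasurable (w k) μ := by
    intro k
    rw [← hrestIoc]
    exact (hvInt (φ k)).1.aestronglyMeasurable
  have humeas : ∀ k, AEStronglyMeasurable (u k) μ := fun k =>
    cle.symm.continuous.comp_aestronglyMeasurable (hwmeas k)
  have hwbd : ∀ k, ∀ᵐ s ∂μ, ‖w k s‖ ≤ L := fun k => (hbds (φ k)).2.1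
  have hcle_symm : ∀ x : Fin n → ℝ, cle (cle.symm x) = x := fun x => cle.apply_symm_apply x
  have hub : ∀ k, ∀ᵐ s ∂μ, ‖u k s‖ ≤ Real.sqrt n * L := by
    intro k
    filter_upwards [hwbd k] with s hs
    calc ‖u k s‖ ≤ Real.sqrt n * ‖(WithLp.equiv 2 (Fin n → ℝ)) (u k s)‖ := eucl_norm_le_sup _
      _ = Real.sqrt n * ‖w k s‖ := rfl
      _ ≤ Real.sqrt n * L := mul_le_mul_of_nonneg_left hs (Real.sqrt_nonneg n)
  have hUmem : ∀ k, MemLp (u k) 2 μ := fun k => MemLp.of_bound (humeas k) _ (hub k)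
  set U : ℕ → Lp (EuclideanSpace ℝ (Fin n)) 2 μ := fun k => (hUmem k).toLp (u k) with hUdef
  have hUcoe : ∀ k, ⇑(U k) =ᵐ[μ] u k := fun k => (hUmem k).coeFn_toLp
  have hUbd : ∀ k, ‖U k‖ ≤
      (measureUnivNNReal μ : ℝ) ^ (2:ENNReal).toReal⁻¹ * (Real.sqrt n * L) := by
    intro k
    apply Lp.norm_le_of_ae_bound (by positivity)
    filter_upwards [hUcoe k, hub k] with s h1 h2
    rw [h1]; exact h2
  obtain ⟨V, hV⟩ := exists_mem_iInter_closure_convexHull U hUbd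
  have hWex : ∀ m : ℕ, ∃ W' ∈ convexHull ℝ (U '' Set.Ici (m:ℕ)), dist V W' < (1/2:ℝ)^m :=
    fun m => Metric.mem_closure_iff.1 (hV m) _ (by positivity)
  choose W hWhull hWdist using hWex
  set Gset : ℝ → Set (Fin n → ℝ) :=
    fun s => (rowMulLM (p s)) '' B s + C s with hGset
  set vfun : ℝ → Fin n → ℝ := fun σ => cle ((V : ℝ → EuclideanSpace ℝ (Fin n)) σ) with hvfun
  have hwsub : ∀ k, ∀ t ∈ Set.Icc (0:ℝ) S, IntervalIntegrable (w k) volume 0 t := by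
    intro k t ht
    apply (hvInt (φ k)).mono_set
    rw [Set.uIcc_of_le hS.le, Set.uIcc_of_le ht.1]
    exact Set.Icc_subset_Icc le_rfl ht.2
  have hae0 : ∀ᵐ s ∂μ, ∀ k, ∃ M ∈ B s, ∃ c ∈ C s,
      w k s = (fun j => ∑ i, q k s i * M i j) + c := MeasureTheory.ae_all_iff.2 fun k => hvMem (φ k)
  have haeub : ∀ᵐ s ∂μ, ∀ k, ‖u k s‖ ≤ Real.sqrt n * L := MeasureTheory.ae_all_iff.2 hub
  have key : ∀ m : ℕ,
      (∀ᵐ s ∂μ, cle ((W m : ℝ → EuclideanSpace ℝ (Fin n)) s) ∈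
          Gset s + Metric.closedBall (0 : Fin n → ℝ) (↑n*R*(1/2)^m)
        ∧ ‖(W m : ℝ → EuclideanSpace ℝ (Fin n)) s‖ ≤ Real.sqrt n * L)
      ∧ ∀ t ∈ Set.Icc (0:ℝ) S,
          ‖(∫ σ in (0:ℝ)..t, cle ((W m : ℝ → EuclideanSpace ℝ (Fin n)) σ)) - (p t - p 0)‖
            ≤ 2*(1/2:ℝ)^m := by
    intro m
    obtain ⟨ι, hι, wt, z, hnn, hsum, hzmem, hzsum⟩ :=
      mem_convexHull_iff_exists_fintype.1 (hWhull m)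
    choose κ hκge hκeq using hzmem
    have hκm : ∀ i, m ≤ κ i := fun i => Set.mem_Ici.1 (hκge i)
    have hcoeW : ⇑(W m) =ᵐ[μ] fun s => ∑ i, wt i • u (κ i) s := by
      rw [← hzsum]
      have h1 := Lp_coeFn_finset_sum Finset.univ (fun i => wt i • z i)
      have h2 : ∀ᵐ s ∂μ, ∀ i : ι, (z i : ℝ → EuclideanSpace ℝ (Fin n)) s = u (κ i) s := by
        apply MeasureTheory.ae_all_iff.2
        intro i
        rw [← hκeq i]
        exact hUcoe (κ i)
      have h3 : ∀ᵐ s ∂μ, ∀ i : ι,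
          ((wt i • z i : Lp (EuclideanSpace ℝ (Fin n)) 2 μ) : ℝ → EuclideanSpace ℝ (Fin n)) s
            = wt i • (z i : ℝ → EuclideanSpace ℝ (Fin n)) s := by
        apply MeasureTheory.ae_all_iff.2
        intro i
        exact Lp.coeFn_smul (wt i) (z i)
      filter_upwards [h1, h2, h3] with s hs1 hs2 hs3
      rw [hs1]
      exact Finset.sum_congr rfl fun i _ => by rw [hs3 i, hs2 i]
    have hcleW : ∀ᵐ s ∂μ, cle ((W m : ℝ → EuclideanSpace ℝ (Fin n)) s)
        = ∑ i, wt i • w (κ i) s := by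
      filter_upwards [hcoeW] with s hs
      rw [hs, map_sum]
      exact Finset.sum_congr rfl fun i _ => by rw [_root_.map_smul, hcle_symm]
    constructor
    · filter_upwards [hcleW, hcoeW, hae0, haeub, ae_restrict_mem measurableSet_Icc]
        with s hs0 hs1 hs2 hs3 hsI
      constructor
      · -- membership in Gset + ball
        have hGconv : Convex ℝ (Gset s + Metric.closedBall (0 : Fin n → ℝ) (↑n*R*(1/2)^m)) := by
          apply Convex.add _ (convex_closedBall _ _)
          exact ((hB s hsI).2.1.linear_image (rowMulLM (p s))).add (hC s hsI).2.1
        rw [hs0]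
        apply hGconv.sum_mem (fun i _ => hnn i) hsum
        intro i _
        obtain ⟨M, hM, c, hc, hrep⟩ := hs2 (κ i)
        refine Set.mem_add.2 ⟨(fun j => ∑ i', p s i' * M i' j) + c,
          Set.mem_add.2 ⟨_, Set.mem_image_of_mem _ hM, c, hc, rfl⟩,
          w (κ i) s - ((fun j => ∑ i', p s i' * M i' j) + c), ?_, by abel⟩
        rw [mem_closedBall_zero_iff]
        have hdiff : w (κ i) s - ((fun j => ∑ i', p s i' * M i' j) + c)
            = (fun j => ∑ i', (q (κ i) s i' - p s i') * M i' j) := by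
          rw [hrep]
          funext j
          simp only [Pi.add_apply, Pi.sub_apply]
          rw [add_sub_add_right_eq_sub, ← Finset.sum_sub_distrib]
          exact Finset.sum_congr rfl fun i' _ => by ring
        rw [hdiff]
        calc ‖(fun j => ∑ i', (q (κ i) s i' - p s i') * M i' j : Fin n → ℝ)‖
            ≤ ↑n * R * ‖q (κ i) s - p s‖ := by
              have := row_bound hR.le (q (κ i) s - p s) M (hBbd s hsI M hM)
              simpa [Pi.sub_apply] using this
          _ ≤ ↑n * R * (1/2:ℝ)^m := by
              apply mul_le_mul_of_nonneg_left _ hnR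
              have h5 := hrate' (κ i) s hsI
              rw [dist_eq_norm] at h5
              rw [← norm_neg, neg_sub]
              exact h5.le.trans (h2lt m (κ i) (hκm i))
      · -- norm bound
        rw [hs1]
        have := combo_norm_le (x := fun i => u (κ i) s) (y := 0) (r := Real.sqrt n * L)
          hnn hsum (fun i => by simpa using hs3 (κ i))
        simpa using this
    · -- integral estimate
      intro t ht
      have hIsub : Set.uIoc (0:ℝ) t ⊆ Set.Icc 0 S := by
        rw [Set.uIoc_of_le ht.1]
        exact fun x hx => ⟨hx.1.le, hx.2.trans ht.2⟩
      have hvol : ∀ᵐ σ ∂volume, σ ∈ Set.uIoc (0:ℝ) t →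
          cle ((W m : ℝ → EuclideanSpace ℝ (Fin n)) σ) = ∑ i, wt i • w (κ i) σ :=
        (ae_restrict_iff' measurableSet_uIoc).1 (ae_restrict_of_ae_restrict_of_subset hIsub hcleW)
      rw [intervalIntegral.integral_congr_ae hvol]
      have hInt : ∀ i : ι, IntervalIntegrable (fun σ => wt i • w (κ i) σ) volume 0 t :=
        fun i => (hwsub (κ i) t ht).smul (wt i)
      rw [intervalIntegral.integral_finset_sum (fun i _ => hInt i)]
      have hIval : ∀ i : ι, (∫ σ in (0:ℝ)..t, wt i • w (κ i) σ)
          = wt i • (q (κ i) t - q (κ i) 0) := by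
        intro i
        rw [intervalIntegral.integral_smul]
        congr 1
        have h1 : q (κ i) t = q (κ i) 0 + ∫ σ in (0:ℝ)..t, w (κ i) σ := hpInt (φ (κ i)) t ht
        rw [h1]
        abel
      rw [Finset.sum_congr rfl (fun i _ => hIval i)]
      apply combo_norm_le hnn hsum
      intro i
      have h1 := hrate' (κ i) t ht
      have h2 := hrate' (κ i) 0 (Set.left_mem_Icc.2 hS.le)
      rw [dist_eq_norm] at h1 h2
      have h3 := h2lt m (κ i) (hκm i)
      calc ‖(q (κ i) t - q (κ i) 0) - (p t - p 0)‖
          = ‖(q (κ i) t - p t) - (q (κ i) 0 - p 0)‖ := by congr 1; abel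
        _ ≤ ‖q (κ i) t - p t‖ + ‖q (κ i) 0 - p 0‖ := norm_sub_le _ _
        _ ≤ (1/2:ℝ)^m + (1/2:ℝ)^m := by
            apply add_le_add
            · rw [← norm_neg, neg_sub]; exact h1.le.trans h3
            · rw [← norm_neg, neg_sub]; exact h2.le.trans h3
        _ = 2*(1/2:ℝ)^m := by ring
  -- pass to the limit
  have hWtend : Filter.Tendsto W atTop (𝓝 V) := by
    rw [tendsto_iff_dist_tendsto_zero]
    apply squeeze_zero (fun m => dist_nonneg) (fun m => (dist_comm (W m) V ▸ (hWdist m).le))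
    exact tendsto_pow_atTop_nhds_zero_of_lt_one (by norm_num) (by norm_num)
  obtain ⟨e, he, haelim⟩ := (tendstoInMeasure_of_tendsto_Lp hWtend).exists_seq_tendsto_ae
  have hVmem : ∀ᵐ s ∂μ, cle ((V : ℝ → EuclideanSpace ℝ (Fin n)) s) ∈ Gset s := by
    filter_upwards [haelim, MeasureTheory.ae_all_iff.2 (fun m => (key m).1),
      ae_restrict_mem measurableSet_Icc] with s hs1 hs2 hsI
    have hGcompact : IsCompact (Gset s) :=
      ((hB s hsI).1.image (rowMulLM (p s)).continuous_of_finiteDimensional).add (hC s hsI).1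
    have hGne : (Gset s).Nonempty :=
      (Set.Nonempty.image _ (hB s hsI).2.2.1).add (hC s hsI).2.2.1
    apply mem_of_closed_approx hGcompact.isClosed hGne
      (y := fun j => cle ((W (e j) : ℝ → EuclideanSpace ℝ (Fin n)) s))
      (r := fun j => ↑n*R*(1/2:ℝ)^(e j)) (fun j => (hs2 (e j)).1) ?_ ?_
    · have h1 : Filter.Tendsto (fun j => ((1:ℝ)/2)^(e j)) atTop (𝓝 0) :=
        (tendsto_pow_atTop_nhds_zero_of_lt_one (by norm_num) (by norm_num)).comp he.tendsto_atTop
      have := h1.const_mul (↑n*R)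
      simpa using this
    · exact (cle.continuous.tendsto _).comp hs1
  refine ⟨vfun, ?_, ?_, ?_⟩
  · -- interval integrability
    rw [intervalIntegrable_iff_integrableOn_Icc_of_le hS.le]
    have hmeas : AEStronglyMeasurable vfun μ :=
      cle.continuous.comp_aestronglyMeasurable (Lp.aestronglyMeasurable V)
    apply Integrable.mono' (integrable_const (↑n*R*Kb + R)) hmeas
    filter_upwards [hVmem, ae_restrict_mem measurableSet_Icc] with s hs hsI
    obtain ⟨g, ⟨M, hM, rfl⟩, c, hc, hgc⟩ := Set.mem_add.1 hs
    have h1 : vfun s = (fun j => ∑ i, p s i * M i j) + c := hgc.symm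
    rw [h1]
    refine (row_mul_bound hR.le (p s) M c (hBbd s hsI M hM) (hCbd s hsI c hc)).trans ?_
    have := hpKb s hsI
    nlinarith
  · -- a.e. membership
    filter_upwards [hVmem] with s hs
    obtain ⟨g, ⟨M, hM, rfl⟩, c, hc, hgc⟩ := Set.mem_add.1 hs
    exact ⟨M, hM, c, hc, hgc.symm⟩
  · -- integral identity
    intro t ht
    have hIsub : Set.uIoc (0:ℝ) t ⊆ Set.Icc 0 S := by
      rw [Set.uIoc_of_le ht.1]
      exact fun x hx => ⟨hx.1.le, hx.2.trans ht.2⟩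
    have hImeas : ∀ᶠ j in atTop,
        AEStronglyMeasurable (fun σ => cle ((W (e j) : ℝ → EuclideanSpace ℝ (Fin n)) σ))
          (volume.restrict (Set.uIoc 0 t)) := by
      apply Filter.Eventually.of_forall
      intro j
      apply cle.continuous.comp_aestronglyMeasurable
      apply (Lp.aestronglyMeasurable (W (e j))).mono_measure
      rw [hμ]
      exact Measure.restrict_mono hIsub le_rfl
    have hbound : ∀ᶠ j in atTop, ∀ᵐ σ ∂volume, σ ∈ Set.uIoc (0:ℝ) t →
        ‖cle ((W (e j) : ℝ → EuclideanSpace ℝ (Fin n)) σ)‖ ≤ Real.sqrt n * L := by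
      apply Filter.Eventually.of_forall
      intro j
      have h1 : ∀ᵐ σ ∂μ, ‖cle ((W (e j) : ℝ → EuclideanSpace ℝ (Fin n)) σ)‖
          ≤ Real.sqrt n * L := by
        filter_upwards [(key (e j)).1] with σ h
        exact le_trans (sup_norm_le_eucl _) h.2
      exact (ae_restrict_iff' measurableSet_uIoc).1 (ae_restrict_of_ae_restrict_of_subset hIsub h1)
    have htendae : ∀ᵐ σ ∂volume, σ ∈ Set.uIoc (0:ℝ) t →
        Filter.Tendsto (fun j => cle ((W (e j) : ℝ → EuclideanSpace ℝ (Fin n)) σ)) atTop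
          (𝓝 (vfun σ)) := by
      have h1 : ∀ᵐ σ ∂μ, Filter.Tendsto
          (fun j => cle ((W (e j) : ℝ → EuclideanSpace ℝ (Fin n)) σ)) atTop (𝓝 (vfun σ)) := by
        filter_upwards [haelim] with σ hσ
        exact (cle.continuous.tendsto _).comp hσ
      exact (ae_restrict_iff' measurableSet_uIoc).1 (ae_restrict_of_ae_restrict_of_subset hIsub h1)
    have hdct := intervalIntegral.tendsto_integral_filter_of_dominated_convergence
      (F := fun j σ => cle ((W (e j) : ℝ → EuclideanSpace ℝ (Fin n)) σ)) (f := vfun)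
      (μ := volume) (a := 0) (b := t) (fun _ => Real.sqrt n * L) hImeas hbound
      intervalIntegrable_const htendae
    have hlim2 : Filter.Tendsto
        (fun j => ∫ σ in (0:ℝ)..t, cle ((W (e j) : ℝ → EuclideanSpace ℝ (Fin n)) σ)) atTop
        (𝓝 (p t - p 0)) := by
      rw [tendsto_iff_dist_tendsto_zero]
      apply squeeze_zero (fun _ => dist_nonneg) (g := fun j => 2*(1/2:ℝ)^j) (fun j => ?_)
      · have := tendsto_pow_atTop_nhds_zero_of_lt_one (r := (1/2:ℝ)) (by norm_num) (by norm_num)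
        simpa using this.const_mul 2
      · rw [dist_eq_norm]
        refine ((key (e j)).2 t ht).trans ?_
        have h3 := h2lt j (e j) (he.le_apply)
        nlinarith
    have hfinal := tendsto_nhds_unique hdct hlim2
    rw [hfinal]
    abel
end
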